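/- arXiv:2005.14577 — 2 statements merged into one kernel-verified Lean document; each statement's English description precedes it below -/
import Mathlib

section
/- Let R be a commutative ring with a distinguished invertible element q^{1/2} (write q = (q^{1/2})^2). Let Q be an antisymmetric r×r integer matrix, Q' an antisymmetric r'×r' integer matrix, and H an r×r' integer matrix such that H Q' Hᵀ = Q. Then the R-linear map T(Q) → T(Q') defined on the basis of normalized monomials by x^k ↦ x^{kH} (where kH ∈ ℤ^{r'} is the product of the row vector k with the matrix H) is an R-algebra homomorphism. -/
open scoped BigOperators Matrix

/-- Defining relations of the quantum torus `T(Q)` over a commutative ring `R`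
with distinguished invertible element `sqq = q^{1/2}` (so `q = sqq^2`):
generators `x_i = ι (Sum.inl i)` and their inverses `x_i⁻¹ = ι (Sum.inr i)`,
relations `x_i x_i⁻¹ = x_i⁻¹ x_i = 1` and `x_i x_j = q^{Q i j} x_j x_i`. -/
inductive QTRel (R : Type) [CommRing R] (sqq : Rˣ) {r : ℕ} (Q : Matrix (Fin r) (Fin r) ℤ) :
    FreeAlgebra R (Fin r ⊕ Fin r) → FreeAlgebra R (Fin r ⊕ Fin r) → Prop
  | mul_inv (i : Fin r) :
      QTRel R sqq Q (FreeAlgebra.ι R (Sum.inl i) * FreeAlgebra.ι R (Sum.inr i)) 1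
  | inv_mul (i : Fin r) :
      QTRel R sqq Q (FreeAlgebra.ι R (Sum.inr i) * FreeAlgebra.ι R (Sum.inl i)) 1
  | qcomm (i j : Fin r) :
      QTRel R sqq Q (FreeAlgebra.ι R (Sum.inl i) * FreeAlgebra.ι R (Sum.inl j))
        (((sqq ^ (2 * Q i j) : Rˣ) : R) •
          (FreeAlgebra.ι R (Sum.inl j) * FreeAlgebra.ι R (Sum.inl i)))

/-- The quantum torus `T(Q)`. -/
def QuantumTorus (R : Type) [CommRing R] (sqq : Rˣ) {r : ℕ}
    (Q : Matrix (Fin r) (Fin r) ℤ) : Type :=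
  RingQuot (QTRel R sqq Q)

noncomputable instance (R : Type) [CommRing R] (sqq : Rˣ) {r : ℕ}
    (Q : Matrix (Fin r) (Fin r) ℤ) : Ring (QuantumTorus R sqq Q) :=
  inferInstanceAs (Ring (RingQuot (QTRel R sqq Q)))

noncomputable instance (R : Type) [CommRing R] (sqq : Rˣ) {r : ℕ}
    (Q : Matrix (Fin r) (Fin r) ℤ) : Algebra R (QuantumTorus R sqq Q) :=
  inferInstanceAs (Algebra R (RingQuot (QTRel R sqq Q)))

namespace QuantumTorus

variable {R : Type} [CommRing R] (sqq : Rˣ) {r : ℕ} (Q : Matrix (Fin r) (Fin r) ℤ)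

/-- The generator `x_i` of the quantum torus. -/
noncomputable def X (i : Fin r) : QuantumTorus R sqq Q :=
  RingQuot.mkAlgHom R (QTRel R sqq Q) (FreeAlgebra.ι R (Sum.inl i))

/-- The inverse generator `x_i⁻¹` of the quantum torus. -/
noncomputable def Xinv (i : Fin r) : QuantumTorus R sqq Q :=
  RingQuot.mkAlgHom R (QTRel R sqq Q) (FreeAlgebra.ι R (Sum.inr i))

/-- `x_i^k` for `k : ℤ`, using the inverse generator for negative powers. -/
noncomputable def genPow (i : Fin r) (k : ℤ) : QuantumTorus R sqq Q :=
  if 0 ≤ k then X sqq Q i ^ k.toNat else Xinv sqq Q i ^ (-k).toNat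

end QuantumTorus

/-- The pairing `⟨k,k'⟩_Q = ∑_{i,j} Q i j * k i * k' j`. -/
def quantumPairing {r : ℕ} (Q : Matrix (Fin r) (Fin r) ℤ) (k k' : Fin r → ℤ) : ℤ :=
  ∑ i, ∑ j, Q i j * k i * k' j

/-- The sum `∑_{i<j} Q i j * k i * k j` used to normalize monomials. -/
def quantumUpperSum {r : ℕ} (Q : Matrix (Fin r) (Fin r) ℤ) (k : Fin r → ℤ) : ℤ :=
  ∑ i, ∑ j, if i < j then Q i j * k i * k j else 0

/-- The normalized monomial
`x^k = q^{-(1/2) ∑_{i<j} Q i j k_i k_j} x_1^{k_1} ⋯ x_r^{k_r}`. -/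
noncomputable def QuantumTorus.monomial {R : Type} [CommRing R] (sqq : Rˣ) {r : ℕ}
    (Q : Matrix (Fin r) (Fin r) ℤ) (k : Fin r → ℤ) : QuantumTorus R sqq Q :=
  ((sqq ^ (-(quantumUpperSum Q k)) : Rˣ) : R) •
    ((List.finRange r).map (fun i => QuantumTorus.genPow sqq Q i (k i))).prod
namespace QTAux
open QuantumTorus

variable {R : Type} [CommRing R] (sqq : Rˣ) {n : ℕ} (M : Matrix (Fin n) (Fin n) ℤ)

/-- central unit `q^{c/2}` in the quantum torus -/
noncomputable def sU (c : ℤ) : (QuantumTorus R sqq M)ˣ :=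
  Units.map (algebraMap R (QuantumTorus R sqq M)).toMonoidHom (sqq ^ c)

lemma sU_val (c : ℤ) :
    ((sU sqq M c : (QuantumTorus R sqq M)ˣ) : QuantumTorus R sqq M)
      = algebraMap R _ ((sqq ^ c : Rˣ) : R) := rfl

lemma smul_eq_sU (c : ℤ) (x : QuantumTorus R sqq M) :
    ((sqq ^ c : Rˣ) : R) • x = (sU sqq M c : (QuantumTorus R sqq M)ˣ) * x := by
  rw [Algebra.smul_def, sU_val]

lemma sU_add (c d : ℤ) : sU sqq M (c + d) = sU sqq M c * sU sqq M d := by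
  simp [sU, zpow_add, map_mul]

lemma sU_central (c : ℤ) (x : (QuantumTorus R sqq M)ˣ) : Commute (sU sqq M c) x := by
  apply Units.ext
  show _ * _ = _ * _
  rw [sU_val]
  exact Algebra.commutes _ _

lemma X_mul_Xinv (i : Fin n) : X sqq M i * Xinv sqq M i = 1 := by
  have := RingQuot.mkAlgHom_rel R (QTRel.mul_inv (R := R) (sqq := sqq) (Q := M) i)
  exact (map_mul _ _ _).symm.trans (this.trans (map_one _))

lemma Xinv_mul_X (i : Fin n) : Xinv sqq M i * X sqq M i = 1 := by
  have := RingQuot.mkAlgHom_rel R (QTRel.inv_mul (R := R) (sqq := sqq) (Q := M) i)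
  exact (map_mul _ _ _).symm.trans (this.trans (map_one _))

lemma X_qcomm (i j : Fin n) :
    X sqq M i * X sqq M j
      = ((sqq ^ (2 * M i j) : Rˣ) : R) • (X sqq M j * X sqq M i) := by
  have := RingQuot.mkAlgHom_rel R (QTRel.qcomm (R := R) (sqq := sqq) (Q := M) i j)
  exact (map_mul _ _ _).symm.trans (this.trans ((map_smul _ _ _).trans (congrArg _ (map_mul _ _ _))))

/-- the generator as a unit -/
noncomputable def xU (i : Fin n) : (QuantumTorus R sqq M)ˣ :=
  ⟨X sqq M i, Xinv sqq M i, X_mul_Xinv sqq M i, Xinv_mul_X sqq M i⟩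

lemma xU_comm (i j : Fin n) :
    xU sqq M i * xU sqq M j = sU sqq M (2 * M i j) * (xU sqq M j * xU sqq M i) := by
  apply Units.ext
  show X sqq M i * X sqq M j = _ * (X sqq M j * X sqq M i)
  rw [X_qcomm, smul_eq_sU]

lemma genPow_eq (i : Fin n) (k : ℤ) :
    genPow sqq M i k = ((xU sqq M i ^ k : (QuantumTorus R sqq M)ˣ) : QuantumTorus R sqq M) := by
  unfold genPow
  split_ifs with h
  · rw [← Int.toNat_of_nonneg h, zpow_natCast, Units.val_pow_eq_pow_val]; rfl
  · have h2 : xU sqq M i ^ k = (xU sqq M i)⁻¹ ^ (-k).toNat := by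
      rw [← zpow_natCast, Int.toNat_of_nonneg (by omega), inv_zpow, ← zpow_neg, neg_neg]
    rw [h2, Units.val_pow_eq_pow_val]; rfl

end QTAux
namespace QTAux

section GroupLemmas
variable {G : Type*} [Group G]

lemma comm_zpow_right {u v s : G} (hs : ∀ x : G, Commute s x)
    (h : u * v = s * (v * u)) (b : ℤ) : u * v ^ b = s ^ b * (v ^ b * u) := by
  have h' : SemiconjBy u v (s * v) := by
    show u * v = (s * v) * u
    rw [h, mul_assoc]
  have h2 := h'.zpow_right b
  calc u * v ^ b = (s * v) ^ b * u := h2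
    _ = s ^ b * v ^ b * u := by rw [(hs v).mul_zpow]
    _ = s ^ b * (v ^ b * u) := by rw [mul_assoc]

lemma zpow_comm_zpow {u v s : G} (hs : ∀ x : G, Commute s x)
    (h : u * v = s * (v * u)) (a b : ℤ) :
    u ^ a * v ^ b = s ^ (a * b) * (v ^ b * u ^ a) := by
  have h1 : SemiconjBy (v ^ b) u (s ^ (-b) * u) := by
    show v ^ b * u = (s ^ (-b) * u) * v ^ b
    calc v ^ b * u = s ^ (-b) * (s ^ b * (v ^ b * u)) := by
          rw [← mul_assoc, ← zpow_add]; simp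
      _ = s ^ (-b) * (u * v ^ b) := by rw [← comm_zpow_right hs h b]
      _ = (s ^ (-b) * u) * v ^ b := by rw [mul_assoc]
  have h3 := h1.zpow_right a
  have h4 : v ^ b * u ^ a = s ^ (-(a * b)) * (u ^ a * v ^ b) := by
    calc v ^ b * u ^ a = (s ^ (-b) * u) ^ a * v ^ b := h3
      _ = (s ^ (-b)) ^ a * u ^ a * v ^ b := by
          rw [Commute.mul_zpow ((hs u).zpow_left (-b))]
      _ = s ^ (-(a * b)) * (u ^ a * v ^ b) := by
          rw [← zpow_mul, mul_assoc, show -b * a = -(a * b) by ring]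
  rw [h4, ← mul_assoc, ← zpow_add]
  simp

end GroupLemmas

end QTAux
namespace QTAux
open QuantumTorus

variable {n : ℕ}

lemma anti_diag {M : Matrix (Fin n) (Fin n) ℤ} (hM : Mᵀ = -M) (i : Fin n) : M i i = 0 := by
  have := congrFun (congrFun hM i) i
  simp [Matrix.transpose_apply] at this
  omega

lemma anti_swap {M : Matrix (Fin n) (Fin n) ℤ} (hM : Mᵀ = -M) (i j : Fin n) :
    M j i = -M i j := by
  have := congrFun (congrFun hM i) j
  simpa [Matrix.transpose_apply] using this

/-- trichotomy decomposition of a double sum -/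
lemma double_sum_tri (g : Fin n → Fin n → ℤ) :
    ∑ i, ∑ j, g i j
      = (∑ i, ∑ j, if i < j then g i j + g j i else 0) + ∑ i, g i i := by
  have h1 : ∑ i, ∑ j, g i j
      = (∑ i, ∑ j, if i < j then g i j else 0)
        + ((∑ i, ∑ j, if j < i then g i j else 0) + ∑ i, ∑ j, if i = j then g i j else 0) := by
    rw [← Finset.sum_add_distrib, ← Finset.sum_add_distrib]
    refine Finset.sum_congr rfl fun i _ => ?_
    rw [← Finset.sum_add_distrib, ← Finset.sum_add_distrib]
    refine Finset.sum_congr rfl fun j _ => ?_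
    rcases lt_trichotomy i j with h | h | h <;>
      simp [h, lt_irrefl, not_lt_of_gt, lt_asymm, ne_of_lt, ne_of_gt]
  have h2 : (∑ i, ∑ j, if j < i then g i j else 0)
      = ∑ i, ∑ j, if i < j then g j i else 0 := by rw [Finset.sum_comm]
  have h3 : (∑ i, ∑ j, if i = j then g i j else 0) = ∑ i, g i i := by
    refine Finset.sum_congr rfl fun i _ => ?_
    simp [Finset.sum_ite_eq (Finset.univ) i (fun j => g i j), eq_comm]
  rw [h1, h2, h3, ← add_assoc]
  congr 1
  rw [← Finset.sum_add_distrib]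
  refine Finset.sum_congr rfl fun i _ => ?_
  rw [← Finset.sum_add_distrib]
  refine Finset.sum_congr rfl fun j _ => ?_
  split_ifs <;> simp

lemma pairing_eq_upper {M : Matrix (Fin n) (Fin n) ℤ} (hM : Mᵀ = -M) (a b : Fin n → ℤ) :
    quantumPairing M a b
      = ∑ i, ∑ j, if i < j then M i j * (a i * b j - a j * b i) else 0 := by
  unfold quantumPairing
  rw [double_sum_tri (fun i j => M i j * a i * b j)]
  have : ∀ i : Fin n, M i i * a i * b i = 0 := fun i => by rw [anti_diag hM]; ring
  simp only [this, Finset.sum_const_zero, add_zero]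
  refine Finset.sum_congr rfl fun i _ => Finset.sum_congr rfl fun j _ => ?_
  split_ifs with h
  · rw [anti_swap hM i j]; ring
  · rfl

lemma pairing_swap {M : Matrix (Fin n) (Fin n) ℤ} (hM : Mᵀ = -M) (a b : Fin n → ℤ) :
    quantumPairing M b a = -quantumPairing M a b := by
  unfold quantumPairing
  rw [← Finset.sum_neg_distrib]
  rw [Finset.sum_comm]
  refine Finset.sum_congr rfl fun i _ => ?_
  rw [← Finset.sum_neg_distrib]
  refine Finset.sum_congr rfl fun j _ => ?_
  rw [anti_swap hM i j]; ring

lemma pairing_self {M : Matrix (Fin n) (Fin n) ℤ} (hM : Mᵀ = -M) (a : Fin n → ℤ) :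
    quantumPairing M a a = 0 := by
  have := pairing_swap hM a a
  omega

lemma pairing_neg_right (M : Matrix (Fin n) (Fin n) ℤ) (a b : Fin n → ℤ) :
    quantumPairing M a (-b) = -quantumPairing M a b := by
  unfold quantumPairing
  rw [← Finset.sum_neg_distrib]
  refine Finset.sum_congr rfl fun i _ => ?_
  rw [← Finset.sum_neg_distrib]
  refine Finset.sum_congr rfl fun j _ => ?_
  simp only [Pi.neg_apply]; ring

lemma pairing_smul_left (M : Matrix (Fin n) (Fin n) ℤ) (c : ℤ) (a b : Fin n → ℤ) :
    quantumPairing M (c • a) b = c * quantumPairing M a b := by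
  unfold quantumPairing
  rw [Finset.mul_sum]
  refine Finset.sum_congr rfl fun i _ => ?_
  rw [Finset.mul_sum]
  refine Finset.sum_congr rfl fun j _ => ?_
  simp only [Pi.smul_apply, smul_eq_mul]; ring

lemma pairing_smul_right (M : Matrix (Fin n) (Fin n) ℤ) (c : ℤ) (a b : Fin n → ℤ) :
    quantumPairing M a (c • b) = c * quantumPairing M a b := by
  unfold quantumPairing
  rw [Finset.mul_sum]
  refine Finset.sum_congr rfl fun i _ => ?_
  rw [Finset.mul_sum]
  refine Finset.sum_congr rfl fun j _ => ?_
  simp only [Pi.smul_apply, smul_eq_mul]; ring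

lemma pairing_sum_right {ι : Type*} (M : Matrix (Fin n) (Fin n) ℤ) (a : Fin n → ℤ)
    (s : Finset ι) (g : ι → Fin n → ℤ) :
    quantumPairing M a (∑ t ∈ s, g t) = ∑ t ∈ s, quantumPairing M a (g t) := by
  unfold quantumPairing
  have step : ∀ i j, M i j * a i * (∑ t ∈ s, g t) j = ∑ t ∈ s, M i j * a i * g t j :=
    fun i j => by rw [Finset.sum_apply, Finset.mul_sum]
  simp only [step]
  have swap1 : ∀ i : Fin n, (∑ j, ∑ t ∈ s, M i j * a i * g t j)
      = ∑ t ∈ s, ∑ j, M i j * a i * g t j := fun i => Finset.sum_comm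
  simp only [swap1]
  exact Finset.sum_comm

end QTAux
namespace QTAux
open QuantumTorus

/-- generic "sum over ordered pairs in a list" -/
def EG {m : ℕ} (φ : Fin m → Fin m → ℤ) : List (Fin m) → ℤ
  | [] => 0
  | i :: L => (L.map (φ i)).sum + EG φ L

lemma EG_map {m m' : ℕ} (φ : Fin m' → Fin m' → ℤ) (f : Fin m → Fin m') (L : List (Fin m)) :
    EG φ (L.map f) = EG (fun i j => φ (f i) (f j)) L := by
  induction L with
  | nil => rfl
  | cons i L ih => simp [EG, ih, List.map_map]; rfl

lemma list_sum_neg {α : Type*} (f : α → ℤ) (L : List α) :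
    (L.map (fun x => -(f x))).sum = -((L.map f).sum) := by
  induction L with
  | nil => simp
  | cons i L ih => simp [ih]; omega

lemma EG_finRange : ∀ {m : ℕ} (φ : Fin m → Fin m → ℤ),
    EG φ (List.finRange m) = ∑ i, ∑ j, if i < j then φ i j else 0 := by
  intro m
  induction m with
  | zero => intro φ; simp [List.finRange, EG]
  | succ m ih =>
    intro φ
    rw [List.finRange_succ]
    show (((List.finRange m).map Fin.succ).map (φ 0)).sum + EG φ ((List.finRange m).map Fin.succ) = _
    rw [EG_map, ih, List.map_map]
    rw [Fin.sum_univ_succ]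
    congr 1
    · rw [Fin.sum_univ_succ]
      simp only [lt_self_iff_false, if_false, Fin.succ_pos, if_true, zero_add]
      rw [Fin.sum_univ_def]
      rfl
    · rw [Finset.sum_congr rfl fun i (_ : i ∈ Finset.univ) => Fin.sum_univ_succ _]
      simp [Fin.succ_lt_succ_iff]

variable {R : Type} [CommRing R] (sqq : Rˣ) {n : ℕ} (M : Matrix (Fin n) (Fin n) ℤ)

lemma sU_zpow (c m : ℤ) : sU sqq M c ^ m = sU sqq M (c * m) := by
  simp [sU, ← map_zpow, ← zpow_mul]

lemma sU_neg (c : ℤ) : sU sqq M (-c) = (sU sqq M c)⁻¹ := by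
  simp [sU, ← map_zpow]

lemma sU_zero : sU sqq M 0 = 1 := by simp [sU]

/-- product of zpowers of generators along a list -/
noncomputable def PL (k : Fin n → ℤ) (L : List (Fin n)) : (QuantumTorus R sqq M)ˣ :=
  (L.map (fun i => xU sqq M i ^ k i)).prod

lemma PL_nil (k : Fin n → ℤ) : PL sqq M k [] = 1 := rfl

lemma PL_cons (k : Fin n → ℤ) (i : Fin n) (L : List (Fin n)) :
    PL sqq M k (i :: L) = xU sqq M i ^ k i * PL sqq M k L := by
  simp [PL]

lemma xU_zpow_comm (i j : Fin n) (a b : ℤ) :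
    xU sqq M i ^ a * xU sqq M j ^ b
      = sU sqq M (2 * M i j * (a * b)) * (xU sqq M j ^ b * xU sqq M i ^ a) := by
  have := zpow_comm_zpow (sU_central sqq M (2 * M i j)) (xU_comm sqq M i j) a b
  rw [this, sU_zpow]

lemma pull (w : (QuantumTorus R sqq M)ˣ) (a e : Fin n → ℤ)
    (hw : ∀ i, w * (xU sqq M i ^ a i) = sU sqq M (e i) * ((xU sqq M i ^ a i) * w)) :
    ∀ L : List (Fin n),
      w * PL sqq M a L = sU sqq M ((L.map e).sum) * (PL sqq M a L * w) := by
  intro L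
  induction L with
  | nil => simp [PL_nil, sU_zero]
  | cons i L ih =>
    rw [PL_cons]
    calc w * (xU sqq M i ^ a i * PL sqq M a L)
        = (w * (xU sqq M i ^ a i)) * PL sqq M a L := by rw [mul_assoc]
      _ = (sU sqq M (e i) * ((xU sqq M i ^ a i) * w)) * PL sqq M a L := by rw [hw i]
      _ = sU sqq M (e i) * ((xU sqq M i ^ a i) * (w * PL sqq M a L)) := by
          rw [mul_assoc, mul_assoc]
      _ = sU sqq M (e i) * ((xU sqq M i ^ a i) *
            (sU sqq M ((L.map e).sum) * (PL sqq M a L * w))) := by rw [ih]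
      _ = sU sqq M (e i) * (sU sqq M ((L.map e).sum) *
            ((xU sqq M i ^ a i) * (PL sqq M a L * w))) := by
          rw [← mul_assoc (xU sqq M i ^ a i), ← (sU_central sqq M _ _).eq, mul_assoc]
      _ = sU sqq M (e i + (L.map e).sum) *
            ((xU sqq M i ^ a i * PL sqq M a L) * w) := by
          rw [← mul_assoc, ← sU_add, mul_assoc (xU sqq M i ^ a i)]

lemma merge (a b : Fin n → ℤ) :
    ∀ L : List (Fin n),
      PL sqq M a L * PL sqq M b L
        = sU sqq M (EG (fun i j => -(2 * M i j * (b i * a j))) L) * PL sqq M (a + b) L := by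
  intro L
  induction L with
  | nil => simp [PL_nil, EG, sU_zero]
  | cons i L ih =>
    have hw : ∀ j, (xU sqq M i ^ b i) * (xU sqq M j ^ a j)
        = sU sqq M (2 * M i j * (b i * a j)) * ((xU sqq M j ^ a j) * (xU sqq M i ^ b i)) :=
      fun j => xU_zpow_comm sqq M i j (b i) (a j)
    have hswap : PL sqq M a L * (xU sqq M i ^ b i)
        = sU sqq M ((L.map (fun j => -(2 * M i j * (b i * a j)))).sum) *
            ((xU sqq M i ^ b i) * PL sqq M a L) := by
      have h := pull sqq M (xU sqq M i ^ b i) a (fun j => 2 * M i j * (b i * a j)) hw L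
      rw [list_sum_neg, sU_neg]
      rw [h, ← mul_assoc]
      simp
    have csw : ∀ (c : ℤ) (x y : (QuantumTorus R sqq M)ˣ),
        x * (sU sqq M c * y) = sU sqq M c * (x * y) := fun c x y => by
      rw [← mul_assoc, ← (sU_central sqq M c x).eq, mul_assoc]
    rw [PL_cons, PL_cons, PL_cons]
    rw [mul_assoc, ← mul_assoc (PL sqq M a L), hswap]
    simp only [mul_assoc]
    rw [ih]
    rw [csw _ (xU sqq M i ^ b i) (PL sqq M (a + b) L)]
    rw [← mul_assoc (sU sqq M _) (sU sqq M _), ← sU_add]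
    rw [csw _ (xU sqq M i ^ a i)]
    rw [← mul_assoc (xU sqq M i ^ a i) (xU sqq M i ^ b i), ← zpow_add]
    simp only [EG, mul_assoc, Pi.add_apply]

end QTAux
namespace QTAux
open QuantumTorus

variable {R : Type} [CommRing R] (sqq : Rˣ) {n : ℕ} (M : Matrix (Fin n) (Fin n) ℤ)

/-- the normalized monomial as a unit -/
noncomputable def mU (k : Fin n → ℤ) : (QuantumTorus R sqq M)ˣ :=
  sU sqq M (-(quantumUpperSum M k)) * PL sqq M k (List.finRange n)

lemma monomial_eq (k : Fin n → ℤ) :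
    monomial sqq M k = ((mU sqq M k : (QuantumTorus R sqq M)ˣ) : QuantumTorus R sqq M) := by
  unfold QuantumTorus.monomial mU PL
  rw [smul_eq_sU, Units.val_mul]
  congr 1
  show _ = (Units.coeHom (QuantumTorus R sqq M))
    (List.map (fun i => xU sqq M i ^ k i) (List.finRange n)).prod
  rw [map_list_prod, List.map_map]
  congr 1
  refine List.map_congr_left fun i _ => ?_
  exact genPow_eq sqq M i (k i)

lemma exponent_id {M : Matrix (Fin n) (Fin n) ℤ} (hM : Mᵀ = -M) (a b : Fin n → ℤ) :
    -quantumUpperSum M a + (-quantumUpperSum M b +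
        EG (fun i j => -(2 * M i j * (b i * a j))) (List.finRange n))
      = quantumPairing M a b + -quantumUpperSum M (a + b) := by
  rw [EG_finRange, pairing_eq_upper hM]
  unfold quantumUpperSum
  simp only [← Finset.sum_neg_distrib, ← Finset.sum_add_distrib]
  refine Finset.sum_congr rfl fun i _ => ?_
  refine Finset.sum_congr rfl fun j _ => ?_
  split_ifs
  · simp only [Pi.add_apply]; ring
  · ring

lemma mU_mul {M : Matrix (Fin n) (Fin n) ℤ} (hM : Mᵀ = -M) (a b : Fin n → ℤ) :
    mU sqq M a * mU sqq M b = sU sqq M (quantumPairing M a b) * mU sqq M (a + b) := by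
  have csw : ∀ (c : ℤ) (x y : (QuantumTorus R sqq M)ˣ),
      x * (sU sqq M c * y) = sU sqq M c * (x * y) := fun c x y => by
    rw [← mul_assoc, ← (sU_central sqq M c x).eq, mul_assoc]
  unfold mU
  rw [mul_assoc, csw _ (PL sqq M a (List.finRange n))]
  rw [merge]
  rw [← mul_assoc (sU sqq M (-quantumUpperSum M b)), ← sU_add]
  rw [← mul_assoc, ← sU_add]
  rw [exponent_id hM a b, sU_add, mul_assoc]

lemma mU_zero : mU sqq M (0 : Fin n → ℤ) = 1 := by
  unfold mU
  have h1 : quantumUpperSum M (0 : Fin n → ℤ) = 0 := by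
    unfold quantumUpperSum
    refine Finset.sum_eq_zero fun i _ => Finset.sum_eq_zero fun j _ => ?_
    split_ifs <;> simp
  have h2 : PL sqq M (0 : Fin n → ℤ) (List.finRange n) = 1 := by
    unfold PL
    refine List.prod_eq_one fun x hx => ?_
    simp only [List.mem_map] at hx
    obtain ⟨i, _, rfl⟩ := hx
    simp
  rw [h1, h2, neg_zero, sU_zero, mul_one]

end QTAux
namespace QTAux
open QuantumTorus

variable {R : Type} [CommRing R] (sqq : Rˣ) {n : ℕ}

lemma mU_inv {M : Matrix (Fin n) (Fin n) ℤ} (hM : Mᵀ = -M) (k : Fin n → ℤ) :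
    (mU sqq M k)⁻¹ = mU sqq M (-k) := by
  symm
  apply eq_inv_of_mul_eq_one_right
  rw [mU_mul sqq hM k (-k), pairing_neg_right, pairing_self hM, neg_zero, sU_zero, one_mul,
    add_neg_cancel, mU_zero]

lemma mU_zpow {M : Matrix (Fin n) (Fin n) ℤ} (hM : Mᵀ = -M) (h : Fin n → ℤ) (c : ℤ) :
    mU sqq M h ^ c = mU sqq M (c • h) := by
  induction c using Int.induction_on with
  | zero => simpa using (mU_zero sqq M).symm
  | succ k ih =>
    rw [zpow_add_one, ih, mU_mul sqq hM, pairing_smul_left, pairing_self hM, mul_zero,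
      sU_zero, one_mul]
    congr 1
    funext i
    simp [add_smul]
    ring
  | pred k ih =>
    rw [sub_eq_add_neg, zpow_add, zpow_neg_one, ih, mU_inv sqq hM,
      mU_mul sqq hM, pairing_smul_left, pairing_neg_right, pairing_self hM]
    simp only [mul_zero, neg_zero, sU_zero, one_mul]
    congr 1
    funext i
    simp [add_smul, sub_smul]
    ring

lemma prod_mU {M : Matrix (Fin n) (Fin n) ℤ} (hM : Mᵀ = -M) :
    ∀ {m : ℕ} (c : Fin m → Fin n → ℤ),
      ((List.finRange m).map (fun i => mU sqq M (c i))).prod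
        = sU sqq M (∑ i, ∑ j, if i < j then quantumPairing M (c i) (c j) else 0) *
            mU sqq M (∑ i, c i) := by
  intro m
  induction m with
  | zero =>
    intro c
    simp [mU_zero sqq M, sU_zero]
  | succ m ih =>
    intro c
    have csw : ∀ (d : ℤ) (x y : (QuantumTorus R sqq M)ˣ),
        x * (sU sqq M d * y) = sU sqq M d * (x * y) := fun d x y => by
      rw [← mul_assoc, ← (sU_central sqq M d x).eq, mul_assoc]
    rw [List.finRange_succ, List.map_cons, List.prod_cons, List.map_map]
    have : (List.map ((fun i => mU sqq M (c i)) ∘ Fin.succ) (List.finRange m)).prod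
        = ((List.finRange m).map (fun i => mU sqq M ((c ∘ Fin.succ) i))).prod := rfl
    rw [this, ih (c ∘ Fin.succ)]
    rw [csw]
    rw [mU_mul sqq hM, pairing_sum_right]
    rw [← mul_assoc, ← sU_add]
    have e1 : (∑ j : Fin (m+1), if 0 < j then quantumPairing M (c 0) (c j) else 0)
        = ∑ j : Fin m, quantumPairing M (c 0) (c j.succ) := by
      rw [Fin.sum_univ_succ]
      simp [Fin.succ_pos]
    have e2 : ∀ i : Fin m, (∑ j : Fin (m+1),
          if i.succ < j then quantumPairing M (c i.succ) (c j) else 0)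
        = ∑ j : Fin m, if i < j then quantumPairing M (c i.succ) (c j.succ) else 0 := by
      intro i
      rw [Fin.sum_univ_succ]
      simp [Fin.succ_lt_succ_iff]
    congr 1
    · congr 1
      rw [Fin.sum_univ_succ, e1]
      simp only [e2]
      exact add_comm _ _
    · congr 1
      rw [Fin.sum_univ_succ]
      rfl

end QTAux

/-- If `H Q' Hᵀ = Q`, then the `R`-linear map `T(Q) → T(Q')` defined on
the basis of normalized monomials by `x^k ↦ x^{kH}` is an `R`-algebra homomorphism
(a multiplicatively linear homomorphism). -/
theorem quantumTorus_multiplicatively_linear (R : Type) [CommRing R] (sqq : Rˣ)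
    {r r' : ℕ} (Q : Matrix (Fin r) (Fin r) ℤ) (Q' : Matrix (Fin r') (Fin r') ℤ)
    (hQ : Qᵀ = -Q) (hQ' : Q'ᵀ = -Q') (H : Matrix (Fin r) (Fin r') ℤ)
    (hH : H * Q' * Hᵀ = Q) :
    ∃ f : QuantumTorus R sqq Q →ₐ[R] QuantumTorus R sqq Q',
      ∀ k : Fin r → ℤ,
        f (QuantumTorus.monomial sqq Q k) =
          QuantumTorus.monomial sqq Q' (Matrix.vecMul k H) := by
  classical
  set h : Fin r → Fin r' → ℤ := fun i j => H i j with hh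
  have pair_rows : ∀ i i' : Fin r, quantumPairing Q' (h i) (h i') = Q i i' := by
    intro i i'
    conv_rhs => rw [← hH]
    show quantumPairing Q' (h i) (h i') = (H * Q' * Hᵀ) i i'
    unfold quantumPairing
    simp only [Matrix.mul_apply, Matrix.transpose_apply, Finset.sum_mul]
    rw [Finset.sum_comm]
    refine Finset.sum_congr rfl fun a _ => Finset.sum_congr rfl fun b _ => ?_
    simp only [hh]
    ring
  set g : FreeAlgebra R (Fin r ⊕ Fin r) →ₐ[R] QuantumTorus R sqq Q' :=
    FreeAlgebra.lift R (Sum.elim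
      (fun i => ((QTAux.mU sqq Q' (h i) : (QuantumTorus R sqq Q')ˣ) : QuantumTorus R sqq Q'))
      (fun i => ((QTAux.mU sqq Q' (-h i) : (QuantumTorus R sqq Q')ˣ) : QuantumTorus R sqq Q')))
    with hg
  have hgl : ∀ i, g (FreeAlgebra.ι R (Sum.inl i))
      = ((QTAux.mU sqq Q' (h i) : (QuantumTorus R sqq Q')ˣ) : QuantumTorus R sqq Q') := by
    intro i; rw [hg, FreeAlgebra.lift_ι_apply]; rfl
  have hgr : ∀ i, g (FreeAlgebra.ι R (Sum.inr i))
      = ((QTAux.mU sqq Q' (-h i) : (QuantumTorus R sqq Q')ˣ) : QuantumTorus R sqq Q') := by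
    intro i; rw [hg, FreeAlgebra.lift_ι_apply]; rfl
  have hneg1 : ∀ i, -h i = (-1 : ℤ) • h i := by intro i; funext j; simp
  have w : ∀ ⦃x y⦄, QTRel R sqq Q x y → g x = g y := by
    intro x y hxy
    cases hxy with
    | mul_inv i =>
      rw [map_mul, map_one, hgl, hgr, ← Units.val_mul, QTAux.mU_mul sqq hQ',
        QTAux.pairing_neg_right, QTAux.pairing_self hQ', neg_zero, QTAux.sU_zero, one_mul,
        add_neg_cancel, QTAux.mU_zero, Units.val_one]
    | inv_mul i =>
      rw [map_mul, map_one, hgr, hgl, ← Units.val_mul, QTAux.mU_mul sqq hQ',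
        QTAux.pairing_swap hQ' (h i) (-h i), QTAux.pairing_neg_right, QTAux.pairing_self hQ',
        neg_add_cancel, QTAux.mU_zero]
      simp [QTAux.sU_zero]
    | qcomm i j =>
      rw [map_mul, map_smul, map_mul, hgl, hgl]
      rw [← Units.val_mul, ← Units.val_mul, QTAux.mU_mul sqq hQ', QTAux.mU_mul sqq hQ',
        QTAux.pairing_swap hQ', pair_rows, QTAux.anti_swap hQ i j, neg_neg,
        QTAux.smul_eq_sU, ← Units.val_mul]
      congr 1
      rw [← mul_assoc, ← QTAux.sU_add, show 2 * Q i j + -Q i j = Q i j by ring,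
        add_comm (h j) (h i)]
  refine ⟨RingQuot.liftAlgHom R ⟨g, w⟩, ?_⟩
  intro k
  set f : QuantumTorus R sqq Q →ₐ[R] QuantumTorus R sqq Q' :=
    RingQuot.liftAlgHom R ⟨g, w⟩ with hf
  have hfX : ∀ i, f (QuantumTorus.X sqq Q i)
      = ((QTAux.mU sqq Q' (h i) : (QuantumTorus R sqq Q')ˣ) : QuantumTorus R sqq Q') := by
    intro i
    rw [hf]
    show (RingQuot.liftAlgHom R ⟨g, w⟩)
      ((RingQuot.mkAlgHom R (QTRel R sqq Q)) (FreeAlgebra.ι R (Sum.inl i))) = _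
    rw [RingQuot.liftAlgHom_mkAlgHom_apply]
    exact hgl i
  set F : QuantumTorus R sqq Q →* QuantumTorus R sqq Q' := f.toRingHom.toMonoidHom with hF
  have hUF : ∀ i, Units.map F (QTAux.xU sqq Q i) = QTAux.mU sqq Q' (h i) := by
    intro i
    apply Units.ext
    exact hfX i
  have hgen : ∀ (i : Fin r) (a : ℤ), f (QuantumTorus.genPow sqq Q i a)
      = ((QTAux.mU sqq Q' (a • h i) : (QuantumTorus R sqq Q')ˣ) : QuantumTorus R sqq Q') := by
    intro i a
    rw [QTAux.genPow_eq]
    have : f (((QTAux.xU sqq Q i ^ a : (QuantumTorus R sqq Q)ˣ) : QuantumTorus R sqq Q))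
        = ((Units.map F (QTAux.xU sqq Q i ^ a) : (QuantumTorus R sqq Q')ˣ) :
            QuantumTorus R sqq Q') := rfl
    rw [this, map_zpow, hUF, QTAux.mU_zpow sqq hQ']
  -- main computation
  rw [show QuantumTorus.monomial sqq Q k
      = ((sqq ^ (-(quantumUpperSum Q k)) : Rˣ) : R) •
        ((List.finRange r).map (fun i => QuantumTorus.genPow sqq Q i (k i))).prod from rfl]
  rw [map_smul, map_list_prod f, List.map_map]
  have hmap : (List.finRange r).map ((⇑f) ∘ fun i => QuantumTorus.genPow sqq Q i (k i))
      = (List.finRange r).map (fun i =>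
          ((QTAux.mU sqq Q' (k i • h i) : (QuantumTorus R sqq Q')ˣ) :
            QuantumTorus R sqq Q')) :=
    List.map_congr_left fun i _ => hgen i (k i)
  rw [hmap]
  have hcoe : ((List.finRange r).map (fun i =>
        ((QTAux.mU sqq Q' (k i • h i) : (QuantumTorus R sqq Q')ˣ) :
          QuantumTorus R sqq Q'))).prod
      = (((List.finRange r).map (fun i => QTAux.mU sqq Q' (k i • h i))).prod :
          (QuantumTorus R sqq Q')ˣ) := by
    show _ = (Units.coeHom (QuantumTorus R sqq Q'))
      ((List.finRange r).map (fun i => QTAux.mU sqq Q' (k i • h i))).prod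
    rw [map_list_prod, List.map_map]
    rfl
  rw [hcoe, QTAux.prod_mU sqq hQ' (fun i => k i • h i)]
  have hexp : (∑ i, ∑ j, if i < j then quantumPairing Q' (k i • h i) (k j • h j) else 0)
      = quantumUpperSum Q k := by
    unfold quantumUpperSum
    refine Finset.sum_congr rfl fun i _ => Finset.sum_congr rfl fun j _ => ?_
    split_ifs
    · rw [QTAux.pairing_smul_left, QTAux.pairing_smul_right, pair_rows]; ring
    · rfl
  have hsum : (∑ i, k i • h i) = Matrix.vecMul k H := by
    funext j
    rw [Finset.sum_apply]
    simp [Matrix.vecMul, dotProduct, hh]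
  rw [hexp, hsum, QTAux.monomial_eq sqq Q' (Matrix.vecMul k H), QTAux.smul_eq_sU,
    ← Units.val_mul, ← mul_assoc, ← QTAux.sU_add, neg_add_cancel, QTAux.sU_zero, one_mul]
end

section
/- Let R be a field with a distinguished invertible element q^{1/2} (write q = (q^{1/2})^2), and let Q be an antisymmetric r×r integer matrix. Then the set of nonzero elements of the quantum torus T(Q) satisfies both the left and the right Ore conditions; consequently T(Q) has a ring of fractions which is a division ring. -/
open scoped BigOperators Matrix

section PairingLemmas

variable {r : ℕ} (Q : Matrix (Fin r) (Fin r) ℤ)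

/-- upper-triangular pairing -/
def qtUP (k k' : Fin r → ℤ) : ℤ := ∑ i, ∑ j, if i < j then Q i j * k i * k' j else 0

theorem qtUP_self (k : Fin r → ℤ) : quantumUpperSum Q k = qtUP Q k k := rfl

theorem quantumPairing_add_left (k l k' : Fin r → ℤ) :
    quantumPairing Q (k + l) k' = quantumPairing Q k k' + quantumPairing Q l k' := by
  simp [quantumPairing, mul_add, add_mul, Finset.sum_add_distrib]

theorem quantumPairing_add_right (k k' l : Fin r → ℤ) :
    quantumPairing Q k (k' + l) = quantumPairing Q k k' + quantumPairing Q k l := by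
  simp [quantumPairing, mul_add, Finset.sum_add_distrib]

theorem quantumPairing_zero_left (k : Fin r → ℤ) : quantumPairing Q 0 k = 0 := by
  simp [quantumPairing]

theorem quantumPairing_zero_right (k : Fin r → ℤ) : quantumPairing Q k 0 = 0 := by
  simp [quantumPairing]

theorem quantumPairing_neg_left (k k' : Fin r → ℤ) :
    quantumPairing Q (-k) k' = -quantumPairing Q k k' := by
  simp [quantumPairing, Finset.sum_neg_distrib]

theorem quantumPairing_neg_right (k k' : Fin r → ℤ) :
    quantumPairing Q k (-k') = -quantumPairing Q k k' := by
  simp [quantumPairing, Finset.sum_neg_distrib]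

theorem quantumPairing_smul_right (a : ℤ) (k k' : Fin r → ℤ) :
    quantumPairing Q k (a • k') = a * quantumPairing Q k k' := by
  simp [quantumPairing, Finset.mul_sum]
  congr 1; ext i; congr 1; ext j; ring

theorem quantumPairing_single_single (i j : Fin r) (a b : ℤ) :
    quantumPairing Q (Pi.single i a) (Pi.single j b) = a * b * Q i j := by
  simp [quantumPairing, Pi.single_apply, Finset.sum_ite_eq', mul_ite]
  ring

theorem quantumPairing_single_left (j : Fin r) (a : ℤ) (k : Fin r → ℤ) :
    quantumPairing Q (Pi.single j a) k = a * ∑ b, Q j b * k b := by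
  simp [quantumPairing, Pi.single_apply, Finset.mul_sum]
  congr 1; ext b; ring

end PairingLemmas
section UPLemmas

variable {r : ℕ} (Q : Matrix (Fin r) (Fin r) ℤ)

theorem qtUP_add_left (k l k' : Fin r → ℤ) :
    qtUP Q (k + l) k' = qtUP Q k k' + qtUP Q l k' := by
  simp only [qtUP, ← Finset.sum_add_distrib]
  refine Finset.sum_congr rfl fun i _ => Finset.sum_congr rfl fun j _ => ?_
  split <;> simp <;> ring

theorem qtUP_add_right (k k' l : Fin r → ℤ) :
    qtUP Q k (k' + l) = qtUP Q k k' + qtUP Q k l := by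
  simp only [qtUP, ← Finset.sum_add_distrib]
  refine Finset.sum_congr rfl fun i _ => Finset.sum_congr rfl fun j _ => ?_
  split <;> simp <;> ring

theorem qtUP_smul_left (a : ℤ) (k k' : Fin r → ℤ) :
    qtUP Q (a • k) k' = a * qtUP Q k k' := by
  simp only [qtUP, Finset.mul_sum]
  refine Finset.sum_congr rfl fun i _ => Finset.sum_congr rfl fun j _ => ?_
  split <;> simp <;> ring

theorem qtUP_smul_right (a : ℤ) (k k' : Fin r → ℤ) :
    qtUP Q k (a • k') = a * qtUP Q k k' := by
  simp only [qtUP, Finset.mul_sum]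
  refine Finset.sum_congr rfl fun i _ => Finset.sum_congr rfl fun j _ => ?_
  split <;> simp <;> ring

theorem qtUP_single_single (j : Fin r) (a b : ℤ) :
    qtUP Q (Pi.single j a) (Pi.single j b) = 0 := by
  refine Finset.sum_eq_zero fun i _ => Finset.sum_eq_zero fun i' _ => ?_
  rcases eq_or_ne i j with rfl | hi
  · rcases eq_or_ne i' i with rfl | hi'
    · simp
    · simp [Pi.single_apply, hi']
  · simp [Pi.single_apply, hi]

theorem qtUP_single_right (j : Fin r) (a : ℤ) (k : Fin r → ℤ) :
    qtUP Q k (Pi.single j a) = a * ∑ i ∈ Finset.univ.filter (fun i => i < j), Q i j * k i := by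
  simp only [qtUP, Pi.single_apply]
  rw [Finset.mul_sum, Finset.sum_filter]
  refine Finset.sum_congr rfl fun i _ => ?_
  have hterm : ∀ x ∈ Finset.univ,
      (if i < x then Q i x * k i * (if x = j then a else 0) else 0)
      = (if x = j then (if i < x then Q i x * k i * a else 0) else 0) := by
    intro x _
    rcases eq_or_ne x j with rfl | h
    · simp
    · simp [h]
  rw [Finset.sum_congr rfl hterm,
    Finset.sum_ite_eq' Finset.univ j (fun x => if i < x then Q i x * k i * a else 0)]
  simp only [Finset.mem_univ, if_true]
  split <;> ring

theorem qtUP_single_left (j : Fin r) (a : ℤ) (k : Fin r → ℤ) :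
    qtUP Q (Pi.single j a) k = a * ∑ b ∈ Finset.univ.filter (fun b => j < b), Q j b * k b := by
  simp only [qtUP, Pi.single_apply]
  have hterm : ∀ x ∈ Finset.univ,
      (∑ b, if x < b then (Q x b * if x = j then a else 0) * k b else 0)
      = (if x = j then (∑ b, if j < b then a * (Q j b * k b) else 0) else 0) := by
    intro x _
    rcases eq_or_ne x j with rfl | h
    · simp only [eq_self_iff_true, if_true]
      refine Finset.sum_congr rfl fun b _ => ?_
      split <;> ring
    · rw [if_neg h, if_neg h]
      apply Finset.sum_eq_zero
      intro b _
      split <;> ring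
  rw [Finset.mul_sum, Finset.sum_congr rfl hterm,
    Finset.sum_ite_eq' Finset.univ j (fun _ => ∑ b, if j < b then a * (Q j b * k b) else 0)]
  simp only [Finset.mem_univ, if_true]
  exact (Finset.sum_filter _ _).symm

section
variable (hQ : Qᵀ = -Q)
include hQ

theorem qtQ_antisymm (i j : Fin r) : Q j i = -Q i j := by
  have := congrFun (congrFun hQ i) j
  simpa [Matrix.transpose_apply] using this

theorem qtQ_diag (i : Fin r) : Q i i = 0 := by
  have := qtQ_antisymm Q hQ i i; omega

/-- The key exponent identity: pairing minus upper-sum-difference is what comes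
from commuting a generator past the lower part of an ordered monomial. -/
theorem qtKey (j : Fin r) (c : ℤ) (k : Fin r → ℤ) :
    quantumPairing Q (Pi.single j c) k -
      (quantumUpperSum Q (k + Pi.single j c) - quantumUpperSum Q k) =
    2 * ∑ i ∈ Finset.univ.filter (fun i => i < j), quantumPairing Q (Pi.single j c) (k i • Pi.single i 1) := by
  have expand : quantumUpperSum Q (k + Pi.single j c) - quantumUpperSum Q k
      = c * ((∑ i ∈ Finset.univ.filter (fun i => i < j), Q i j * k i)
          + (∑ b ∈ Finset.univ.filter (fun b => j < b), Q j b * k b)) := by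
    rw [qtUP_self, qtUP_self, qtUP_add_left, qtUP_add_right, qtUP_add_right,
      qtUP_single_single, qtUP_single_right, qtUP_single_left]
    ring
  rw [expand]
  have hs : ∀ i : Fin r, quantumPairing Q (Pi.single j c) (k i • Pi.single i 1)
      = k i * (c * Q j i) := by
    intro i
    rw [quantumPairing_smul_right]
    rw [quantumPairing_single_single]
    ring
  simp only [hs]
  rw [quantumPairing_single_left]
  -- split ∑ b, Q j b * k b into b < j, b = j, b > j
  have hsplit : (∑ b, Q j b * k b)
      = (∑ b ∈ Finset.univ.filter (fun b => b < j), Q j b * k b)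
        + (∑ b ∈ Finset.univ.filter (fun b => j < b), Q j b * k b) := by
    rw [← Finset.sum_filter_add_sum_filter_not Finset.univ (fun b => b < j) (fun b => Q j b * k b)]
    congr 1
    rw [← Finset.sum_filter_add_sum_filter_not (Finset.univ.filter (fun b => ¬ b < j))
      (fun b => b = j) (fun b => Q j b * k b)]
    have h1 : ∑ b ∈ (Finset.univ.filter (fun b => ¬ b < j)).filter (fun b => b = j),
        Q j b * k b = 0 := by
      refine Finset.sum_eq_zero fun b hb => ?_
      simp only [Finset.mem_filter] at hb
      rw [hb.2, qtQ_diag Q hQ, zero_mul]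
    have h2 : (Finset.univ.filter (fun b => ¬ b < j)).filter (fun b => ¬ b = j)
        = Finset.univ.filter (fun b => j < b) := by
      ext b; simp only [Finset.mem_filter, Finset.mem_univ, true_and]
      constructor
      · rintro ⟨h1', h2'⟩; omega
      · intro h; omega
    rw [h1, h2, zero_add]
  rw [hsplit]
  have hL : ∑ b ∈ Finset.univ.filter (fun b => b < j), Q j b * k b
      = -∑ i ∈ Finset.univ.filter (fun i => i < j), Q i j * k i := by
    rw [← Finset.sum_neg_distrib]
    exact Finset.sum_congr rfl fun b _ => by rw [qtQ_antisymm Q hQ b j]; ring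
  have hR : ∑ i ∈ Finset.univ.filter (fun i => i < j), k i * (c * Q j i)
      = (-c) * ∑ i ∈ Finset.univ.filter (fun i => i < j), Q i j * k i := by
    rw [Finset.mul_sum]
    exact Finset.sum_congr rfl fun i _ => by rw [qtQ_antisymm Q hQ i j]; ring
  rw [hL, hR]
  ring
end

end UPLemmas
section Model

variable {R : Type} [CommRing R] (sqq : Rˣ) {r : ℕ} (Q : Matrix (Fin r) (Fin r) ℤ)

/-- unit power helper -/
theorem qtu_mul (a b : ℤ) :
    ((sqq ^ a : Rˣ) : R) * ((sqq ^ b : Rˣ) : R) = ((sqq ^ (a + b) : Rˣ) : R) := by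
  rw [← Units.val_mul, ← zpow_add]

/-- The module on which the model quantum torus acts. -/
abbrev QTMod (R : Type) [CommRing R] (r : ℕ) : Type := (Fin r → ℤ) →₀ R

/-- Twisted translation operators. -/
noncomputable def qtT (k : Fin r → ℤ) : Module.End R (QTMod R r) :=
  Finsupp.lsum R fun m => ((sqq ^ quantumPairing Q k m : Rˣ) : R) • Finsupp.lsingle (k + m)

theorem qtT_single (k m : Fin r → ℤ) (c : R) :
    qtT sqq Q k (Finsupp.single m c)
      = ((sqq ^ quantumPairing Q k m : Rˣ) : R) • Finsupp.single (k + m) c := by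
  simp [qtT]

theorem qtT_zero : qtT sqq Q 0 = 1 := by
  refine Finsupp.lhom_ext fun m c => ?_
  simp [qtT_single, quantumPairing_zero_left, Module.End.one_apply]

theorem qtT_mul (v w : Fin r → ℤ) :
    qtT sqq Q v * qtT sqq Q w
      = ((sqq ^ quantumPairing Q v w : Rˣ) : R) • qtT sqq Q (v + w) := by
  refine Finsupp.lhom_ext fun m c => ?_
  simp only [Module.End.mul_apply, LinearMap.smul_apply, qtT_single, Finsupp.smul_single,
    smul_eq_mul, smul_smul]
  have he : quantumPairing Q v (w + m) + quantumPairing Q w m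
      = quantumPairing Q v w + quantumPairing Q (v + w) m := by
    rw [quantumPairing_add_right, quantumPairing_add_left]; ring
  rw [add_assoc, ← mul_assoc, ← mul_assoc, qtu_mul, qtu_mul, he]

/-- The model algebra map from finitely supported exponent functions. -/
noncomputable def qtTheta : ((Fin r → ℤ) →₀ R) →ₗ[R] Module.End R (QTMod R r) :=
  Finsupp.linearCombination R (qtT sqq Q)

theorem qtTheta_single (k : Fin r → ℤ) (c : R) :
    qtTheta sqq Q (Finsupp.single k c) = c • qtT sqq Q k := by
  simp [qtTheta]

/-- evaluation at the vacuum vector recovering coordinates -/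
noncomputable def qtEv : Module.End R (QTMod R r) →ₗ[R] QTMod R r :=
  LinearMap.applyₗ (Finsupp.single 0 1)

theorem qtEv_apply (x : Module.End R (QTMod R r)) :
    qtEv x = x (Finsupp.single 0 1) := rfl

theorem qtEv_qtT (k : Fin r → ℤ) : qtEv (qtT sqq Q k) = Finsupp.single k 1 := by
  rw [qtEv_apply, qtT_single, quantumPairing_zero_right]
  simp

theorem qtEv_theta (f : (Fin r → ℤ) →₀ R) : qtEv (qtTheta sqq Q f) = f := by
  induction f using Finsupp.induction_linear with
  | zero => simp
  | add f₁ f₂ h₁ h₂ => rw [map_add, map_add, h₁, h₂]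
  | single k c =>
    rw [qtTheta_single, map_smul, qtEv_qtT, Finsupp.smul_single, smul_eq_mul, mul_one]

theorem qtTheta_injective : Function.Injective (qtTheta sqq Q (R := R)) := by
  intro f g h
  rw [← qtEv_theta sqq Q f, ← qtEv_theta sqq Q g, h]

/-- multiplication law: the range of `qtTheta` is closed under multiplication. -/
theorem qtTheta_mul (f g : (Fin r → ℤ) →₀ R) :
    qtTheta sqq Q f * qtTheta sqq Q g = qtTheta sqq Q (qtTheta sqq Q f g) := by
  induction f using Finsupp.induction_linear with
  | zero => simp
  | add f₁ f₂ h₁ h₂ => simp only [map_add, add_mul, LinearMap.add_apply, h₁, h₂]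
  | single k c =>
    induction g using Finsupp.induction_linear with
    | zero => simp
    | add g₁ g₂ h₁ h₂ => simp only [map_add, mul_add, LinearMap.add_apply, h₁, h₂]
    | single k' c' =>
      rw [qtTheta_single, qtTheta_single, LinearMap.smul_apply, qtT_single]
      rw [map_smul, map_smul, qtTheta_single]
      rw [smul_mul_assoc, mul_smul_comm, qtT_mul]
      rw [smul_smul, smul_smul, smul_smul, smul_smul]
      congr 1
      ring

end Model
section Coeff

variable {R : Type} [CommRing R] (sqq : Rˣ) {r : ℕ} (Q : Matrix (Fin r) (Fin r) ℤ)

theorem qtT_apply (k m : Fin r → ℤ) (g : QTMod R r) :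
    qtT sqq Q k g m = ((sqq ^ quantumPairing Q k (m - k) : Rˣ) : R) * g (m - k) := by
  classical
  have h1 : qtT sqq Q k g
      = g.sum fun a b => ((sqq ^ quantumPairing Q k a : Rˣ) : R) • Finsupp.single (k + a) b := by
    rw [qtT, Finsupp.lsum_apply]
    rfl
  rw [h1, Finsupp.sum_apply, Finsupp.sum, Finset.sum_eq_single (m - k)]
  · simp [Finsupp.single_apply]
  · intro a _ hne
    rw [Finsupp.smul_apply, Finsupp.single_apply, if_neg, smul_zero]
    intro h
    exact hne (eq_sub_of_add_eq' h)
  · intro hnot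
    rw [Finsupp.notMem_support_iff.mp hnot]
    simp

theorem qtMulCoeff (f g : QTMod R r) (m : Fin r → ℤ) :
    qtTheta sqq Q f g m
      = ∑ k ∈ f.support,
          f k * (((sqq ^ quantumPairing Q k (m - k) : Rˣ) : R) * g (m - k)) := by
  rw [qtTheta, Finsupp.linearCombination_apply, Finsupp.sum, LinearMap.coe_sum,
    Finset.sum_apply, Finsupp.finset_sum_apply]
  refine Finset.sum_congr rfl fun k _ => ?_
  rw [LinearMap.smul_apply, Finsupp.smul_apply, qtT_apply, smul_eq_mul]

theorem qtMul_support (f g : QTMod R r) (m : Fin r → ℤ) (h : qtTheta sqq Q f g m ≠ 0) :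
    ∃ a ∈ f.support, ∃ b ∈ g.support, m = a + b := by
  rw [qtMulCoeff] at h
  obtain ⟨k, hk, hterm⟩ := Finset.exists_ne_zero_of_sum_ne_zero h
  refine ⟨k, hk, m - k, ?_, by abel⟩
  rw [Finsupp.mem_support_iff]
  intro h0
  rw [h0] at hterm
  simp at hterm

end Coeff

section Domain

variable {R : Type} [Field R] (sqq : Rˣ) {r : ℕ} (Q : Matrix (Fin r) (Fin r) ℤ)

theorem qtTheta_apply_ne_zero {f g : QTMod R r} (hf : f ≠ 0) (hg : g ≠ 0) :
    qtTheta sqq Q f g ≠ 0 := by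
  classical
  obtain ⟨k0, hk0, k1, hk1, huniq⟩ :=
    UniqueSums.uniqueAdd_of_nonempty (Finsupp.support_nonempty_iff.mpr hf)
      (Finsupp.support_nonempty_iff.mpr hg)
  intro hzero
  have hco : qtTheta sqq Q f g (k0 + k1) = 0 := by rw [hzero]; rfl
  rw [qtMulCoeff, Finset.sum_eq_single k0] at hco
  · have hsub : k0 + k1 - k0 = k1 := by abel
    rw [hsub] at hco
    exact (mul_ne_zero (Finsupp.mem_support_iff.mp hk0)
      (mul_ne_zero (Units.ne_zero _) (Finsupp.mem_support_iff.mp hk1))) hco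
  · intro k hk hne
    have hg0 : g (k0 + k1 - k) = 0 := by
      by_contra hgz
      have hmem : k0 + k1 - k ∈ g.support := Finsupp.mem_support_iff.mpr hgz
      have hsum : k + (k0 + k1 - k) = k0 + k1 := by abel
      exact hne (huniq hk hmem hsum).1
    rw [hg0, mul_zero, mul_zero]
  · intro hnot
    exact absurd hk0 hnot

theorem qtTheta_mul_ne_zero {f g : QTMod R r} (hf : f ≠ 0) (hg : g ≠ 0) :
    qtTheta sqq Q f * qtTheta sqq Q g ≠ 0 := by
  rw [qtTheta_mul]
  intro h
  have : qtTheta sqq Q f g = 0 := by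
    apply qtTheta_injective sqq Q
    rw [h, map_zero]
  exact qtTheta_apply_ne_zero sqq Q hf hg this

end Domain
section QTSide

open QuantumTorus

variable {R : Type} [CommRing R] (sqq : Rˣ) {r : ℕ} (Q : Matrix (Fin r) (Fin r) ℤ)

/-- generators of the quantum torus indexed by `Fin r ⊕ Fin r` -/
noncomputable def qtGen : Fin r ⊕ Fin r → QuantumTorus R sqq Q :=
  Sum.elim (X sqq Q) (Xinv sqq Q)

/-- weights of generators -/
def qtWt : Fin r ⊕ Fin r → (Fin r → ℤ) :=
  Sum.elim (fun i => Pi.single i 1) (fun i => -Pi.single i 1)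

theorem qtX_mul_Xinv (i : Fin r) : X sqq Q i * Xinv sqq Q i = 1 := by
  have h := RingQuot.mkAlgHom_rel R (QTRel.mul_inv (R := R) (sqq := sqq) (Q := Q) i)
  rw [map_mul, map_one] at h
  exact h

theorem qtXinv_mul_X (i : Fin r) : Xinv sqq Q i * X sqq Q i = 1 := by
  have h := RingQuot.mkAlgHom_rel R (QTRel.inv_mul (R := R) (sqq := sqq) (Q := Q) i)
  rw [map_mul, map_one] at h
  exact h

theorem qtX_comm (i j : Fin r) :
    X sqq Q i * X sqq Q j
      = ((sqq ^ (2 * Q i j) : Rˣ) : R) • (X sqq Q j * X sqq Q i) := by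
  have h := RingQuot.mkAlgHom_rel R (QTRel.qcomm (R := R) (sqq := sqq) (Q := Q) i j)
  rw [map_mul, map_smul, map_mul] at h
  exact h

theorem qtConj {x xi y : QuantumTorus R sqq Q} {c : R}
    (h1 : xi * x = 1) (h2 : x * xi = 1) (h : x * y = c • (y * x)) :
    y * xi = c • (xi * y) :=
  calc y * xi = (xi * x) * (y * xi) := by rw [h1, one_mul]
    _ = xi * ((x * y) * xi) := by simp only [mul_assoc]
    _ = xi * ((c • (y * x)) * xi) := by rw [h]
    _ = c • ((xi * y) * (x * xi)) := by
        simp only [smul_mul_assoc, mul_smul_comm, mul_assoc]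
    _ = c • (xi * y) := by rw [h2, mul_one]

theorem qtConj' {x xi y : QuantumTorus R sqq Q} {c : R}
    (h1 : xi * x = 1) (h2 : x * xi = 1) (h : y * x = c • (x * y)) :
    xi * y = c • (y * xi) :=
  calc xi * y = (xi * y) * (x * xi) := by rw [h2, mul_one]
    _ = xi * ((y * x) * xi) := by simp only [mul_assoc]
    _ = xi * ((c • (x * y)) * xi) := by rw [h]
    _ = c • ((xi * x) * (y * xi)) := by
        simp only [smul_mul_assoc, mul_smul_comm, mul_assoc]
    _ = c • (y * xi) := by rw [h1, one_mul]

theorem qtX_Xinv_comm (i j : Fin r) :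
    X sqq Q i * Xinv sqq Q j
      = ((sqq ^ (2 * Q j i) : Rˣ) : R) • (Xinv sqq Q j * X sqq Q i) :=
  qtConj sqq Q (qtXinv_mul_X sqq Q j) (qtX_mul_Xinv sqq Q j) (qtX_comm sqq Q j i)

theorem qtXinv_X_comm (i j : Fin r) :
    Xinv sqq Q i * X sqq Q j
      = ((sqq ^ (2 * Q j i) : Rˣ) : R) • (X sqq Q j * Xinv sqq Q i) :=
  qtConj' sqq Q (qtXinv_mul_X sqq Q i) (qtX_mul_Xinv sqq Q i) (qtX_comm sqq Q j i)

theorem qtXinv_Xinv_comm (i j : Fin r) :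
    Xinv sqq Q i * Xinv sqq Q j
      = ((sqq ^ (2 * Q i j) : Rˣ) : R) • (Xinv sqq Q j * Xinv sqq Q i) :=
  qtConj' sqq Q (qtXinv_mul_X sqq Q i) (qtX_mul_Xinv sqq Q i) (qtXinv_X_comm sqq Q j i)

theorem qtGen_comm (hQ : Qᵀ = -Q) (s t : Fin r ⊕ Fin r) :
    qtGen sqq Q s * qtGen sqq Q t
      = ((sqq ^ (2 * quantumPairing Q (qtWt s) (qtWt t)) : Rˣ) : R)
          • (qtGen sqq Q t * qtGen sqq Q s) := by
  cases s with
  | inl i =>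
    cases t with
    | inl j =>
      have hp : quantumPairing Q (qtWt (Sum.inl i : Fin r ⊕ Fin r)) (qtWt (Sum.inl j)) = Q i j := by
        simp [qtWt, quantumPairing_single_single]
      rw [hp]; exact qtX_comm sqq Q i j
    | inr j =>
      have hp : quantumPairing Q (qtWt (Sum.inl i : Fin r ⊕ Fin r)) (qtWt (Sum.inr j)) = Q j i := by
        simp [qtWt, quantumPairing_neg_right, quantumPairing_single_single,
          qtQ_antisymm Q hQ i j]
      rw [hp]; exact qtX_Xinv_comm sqq Q i j
  | inr i =>
    cases t with
    | inl j =>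
      have hp : quantumPairing Q (qtWt (Sum.inr i : Fin r ⊕ Fin r)) (qtWt (Sum.inl j)) = Q j i := by
        simp [qtWt, quantumPairing_neg_left, quantumPairing_single_single,
          qtQ_antisymm Q hQ i j]
      rw [hp]; exact qtXinv_X_comm sqq Q i j
    | inr j =>
      have hp : quantumPairing Q (qtWt (Sum.inr i : Fin r ⊕ Fin r)) (qtWt (Sum.inr j)) = Q i j := by
        simp [qtWt, quantumPairing_neg_left, quantumPairing_neg_right,
          quantumPairing_single_single]
      rw [hp]; exact qtXinv_Xinv_comm sqq Q i j

end QTSide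
section Powers

open QuantumTorus

variable {R : Type} [CommRing R] (sqq : Rˣ) {r : ℕ} (Q : Matrix (Fin r) (Fin r) ℤ)

theorem qt_pow_comm {x y : QuantumTorus R sqq Q} {c : R}
    (h : x * y = c • (y * x)) (n : ℕ) : x * y ^ n = c ^ n • (y ^ n * x) := by
  induction n with
  | zero => simp
  | succ n ih =>
    rw [pow_succ', ← mul_assoc, h, smul_mul_assoc, mul_assoc, ih, mul_smul_comm, smul_smul,
      ← mul_assoc, ← pow_succ', ← pow_succ']

theorem qtu_pow (e : ℤ) (n : ℕ) :
    (((sqq ^ e : Rˣ) : R)) ^ n = ((sqq ^ (e * n) : Rˣ) : R) := by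
  rw [← Units.val_pow_eq_pow_val, ← zpow_natCast (sqq ^ e), ← zpow_mul]

theorem qtGen_genPow_comm (hQ : Qᵀ = -Q) (s : Fin r ⊕ Fin r) (i : Fin r) (a : ℤ) :
    qtGen sqq Q s * genPow sqq Q i a
      = ((sqq ^ (2 * quantumPairing Q (qtWt s) (a • Pi.single i 1)) : Rˣ) : R)
          • (genPow sqq Q i a * qtGen sqq Q s) := by
  by_cases h : 0 ≤ a
  · have hg : genPow sqq Q i a = qtGen sqq Q (Sum.inl i) ^ a.toNat := by
      simp [genPow, if_pos h, qtGen]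
    rw [hg, qt_pow_comm sqq Q (qtGen_comm sqq Q hQ s (Sum.inl i)), qtu_pow]
    congr 2
    rw [quantumPairing_smul_right]
    have : ((a.toNat : ℕ) : ℤ) = a := Int.toNat_of_nonneg h
    rw [this]
    have : qtWt (Sum.inl i : Fin r ⊕ Fin r) = Pi.single i 1 := rfl
    rw [this]
    ring
  · have hg : genPow sqq Q i a = qtGen sqq Q (Sum.inr i) ^ (-a).toNat := by
      simp [genPow, if_neg h, qtGen]
    rw [hg, qt_pow_comm sqq Q (qtGen_comm sqq Q hQ s (Sum.inr i)), qtu_pow]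
    congr 2
    rw [quantumPairing_smul_right]
    have h1 : (((-a).toNat : ℕ) : ℤ) = -a := Int.toNat_of_nonneg (by omega)
    rw [h1]
    have h2 : qtWt (Sum.inr i : Fin r ⊕ Fin r) = -Pi.single i 1 := rfl
    rw [h2, quantumPairing_neg_right]
    ring

theorem qtGenPow_succ (j : Fin r) (a : ℤ) :
    qtGen sqq Q (Sum.inl j) * genPow sqq Q j a = genPow sqq Q j (a + 1) := by
  show X sqq Q j * genPow sqq Q j a = genPow sqq Q j (a + 1)
  by_cases h : 0 ≤ a
  · simp only [genPow, if_pos h, if_pos (by omega : (0:ℤ) ≤ a + 1)]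
    rw [← pow_succ']
    congr 1
    omega
  · simp only [genPow, if_neg h]
    have hn : (-a).toNat = (-(a+1)).toNat + 1 := by omega
    rw [hn, pow_succ', ← mul_assoc, qtX_mul_Xinv, one_mul]
    by_cases h1 : 0 ≤ a + 1
    · have h2 : (-(a+1)).toNat = 0 := by omega
      have h3 : (a+1).toNat = 0 := by omega
      rw [if_pos h1, h2, h3, pow_zero, pow_zero]
    · rw [if_neg h1]

theorem qtGenPow_pred (j : Fin r) (a : ℤ) :
    qtGen sqq Q (Sum.inr j) * genPow sqq Q j a = genPow sqq Q j (a + (-1)) := by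
  show Xinv sqq Q j * genPow sqq Q j a = genPow sqq Q j (a + (-1))
  by_cases h : 0 ≤ a
  · by_cases h0 : 0 ≤ a + (-1)
    · simp only [genPow, if_pos h, if_pos h0]
      have hn : a.toNat = (a + (-1)).toNat + 1 := by omega
      rw [hn, pow_succ', ← mul_assoc, qtXinv_mul_X, one_mul]
    · have ha : a = 0 := by omega
      subst ha
      simp only [genPow, if_pos h, if_neg h0]
      norm_num
  · simp only [genPow, if_neg h, if_neg (by omega : ¬ (0:ℤ) ≤ a + (-1))]
    rw [← pow_succ']
    congr 1
    omega

end Powers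
section Core

open QuantumTorus

theorem qtFinRange_split {r : ℕ} (j : Fin r) :
    List.finRange r
      = ((List.finRange r).filter (fun i => decide (i < j)))
        ++ j :: ((List.finRange r).filter (fun i => decide (j < i))) := by
  have nd : (List.finRange r).Nodup := List.nodup_finRange r
  have st : List.Pairwise (· < ·) (List.finRange r) := List.pairwise_lt_finRange r
  have sf1 : List.Pairwise (· < ·) ((List.finRange r).filter (fun i => decide (i < j))) :=
    List.Pairwise.sublist List.filter_sublist st
  have sf2 : List.Pairwise (· < ·) ((List.finRange r).filter (fun i => decide (j < i))) :=
    List.Pairwise.sublist List.filter_sublist st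
  refine List.Perm.eq_of_pairwise (fun a b _ _ h1 h2' => absurd (h1.trans h2') (lt_irrefl a)) st ?_ ?_
  swap
  · apply List.perm_of_nodup_nodup_toFinset_eq nd
    · refine List.Nodup.append (nd.filter _) ?_ ?_
      · refine List.Nodup.cons ?_ (nd.filter _)
        intro hj
        simp only [List.mem_filter, decide_eq_true_eq] at hj
        exact lt_irrefl j hj.2
      · intro a ha hb
        simp only [List.mem_filter, decide_eq_true_eq] at ha
        rcases List.mem_cons.mp hb with rfl | hmem
        · exact lt_irrefl a ha.2
        · simp only [List.mem_filter, decide_eq_true_eq] at hmem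
          exact absurd (ha.2.trans hmem.2) (lt_irrefl a)
    · ext a
      simp only [List.toFinset_append, List.toFinset_cons, List.toFinset_filter,
        List.toFinset_finRange, Finset.mem_union, Finset.mem_insert, Finset.mem_filter,
        Finset.mem_univ, true_and, decide_eq_true_eq, iff_true]
      exact iff_of_true trivial (lt_trichotomy a j)
  · show List.Pairwise (· < ·) _
    rw [List.pairwise_append]
    refine ⟨sf1, ?_, ?_⟩
    · rw [List.pairwise_cons]
      constructor
      · intro b hb
        simp only [List.mem_filter, decide_eq_true_eq] at hb
        exact hb.2
      · exact sf2
    · intro a ha b hb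
      simp only [List.mem_filter, decide_eq_true_eq] at ha
      rcases List.mem_cons.mp hb with rfl | hmem
      · exact ha.2
      · simp only [List.mem_filter, decide_eq_true_eq] at hmem
        exact ha.2.trans hmem.2

variable {R : Type} [CommRing R] (sqq : Rˣ) {r : ℕ} (Q : Matrix (Fin r) (Fin r) ℤ)

theorem qtPull (hQ : Qᵀ = -Q) (s : Fin r ⊕ Fin r) (k : Fin r → ℤ) (l : List (Fin r)) :
    qtGen sqq Q s * (l.map fun i => genPow sqq Q i (k i)).prod
      = ((sqq ^ (2 * (l.map fun i =>
            quantumPairing Q (qtWt s) (k i • Pi.single i 1)).sum) : Rˣ) : R)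
          • ((l.map fun i => genPow sqq Q i (k i)).prod * qtGen sqq Q s) := by
  induction l with
  | nil => simp
  | cons i l ih =>
    simp only [List.map_cons, List.prod_cons, List.sum_cons]
    rw [← mul_assoc, qtGen_genPow_comm sqq Q hQ s i (k i), smul_mul_assoc, mul_assoc, ih,
      mul_smul_comm, smul_smul, qtu_mul]
    have he : 2 * quantumPairing Q (qtWt s) (k i • Pi.single i 1)
        + 2 * (l.map fun i => quantumPairing Q (qtWt s) (k i • Pi.single i 1)).sum
        = 2 * (quantumPairing Q (qtWt s) (k i • Pi.single i 1)
            + (l.map fun i => quantumPairing Q (qtWt s) (k i • Pi.single i 1)).sum) := by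
      ring
    rw [he, ← mul_assoc]

theorem qtSingle_smul {r : ℕ} (j : Fin r) (c : ℤ) :
    c • (Pi.single j 1 : Fin r → ℤ) = Pi.single j c := by
  funext x
  rcases eq_or_ne x j with rfl | h
  · simp
  · simp [Pi.single_eq_of_ne h]

theorem qtCoreAux (hQ : Qᵀ = -Q) (s : Fin r ⊕ Fin r) (j : Fin r) (c : ℤ)
    (hwt : qtWt s = (Pi.single j c : Fin r → ℤ))
    (hmerge : ∀ a : ℤ, qtGen sqq Q s * genPow sqq Q j a = genPow sqq Q j (a + c))
    (k : Fin r → ℤ) :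
    qtGen sqq Q s * QuantumTorus.monomial sqq Q k
      = ((sqq ^ quantumPairing Q (Pi.single j c) k : Rˣ) : R)
          • QuantumTorus.monomial sqq Q (k + Pi.single j c) := by
  classical
  set k' : Fin r → ℤ := k + Pi.single j c with hk'def
  set L1 := (List.finRange r).filter (fun i => decide (i < j)) with hL1
  set L2 := (List.finRange r).filter (fun i => decide (j < i)) with hL2
  set A : QuantumTorus R sqq Q := (L1.map fun i => genPow sqq Q i (k i)).prod with hA
  set B : QuantumTorus R sqq Q := (L2.map fun i => genPow sqq Q i (k i)).prod with hB
  have hmem1 : ∀ i ∈ L1, i ≠ j := by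
    intro i hi
    simp only [hL1, List.mem_filter, decide_eq_true_eq] at hi
    exact ne_of_lt hi.2
  have hmem2 : ∀ i ∈ L2, i ≠ j := by
    intro i hi
    simp only [hL2, List.mem_filter, decide_eq_true_eq] at hi
    exact fun h => absurd (h ▸ hi.2) (lt_irrefl j)
  have hsplitP : ∀ m : Fin r → ℤ,
      ((List.finRange r).map fun i => genPow sqq Q i (m i)).prod
        = (L1.map fun i => genPow sqq Q i (m i)).prod
          * (genPow sqq Q j (m j) * (L2.map fun i => genPow sqq Q i (m i)).prod) := by
    intro m
    rw [qtFinRange_split j, List.map_append, List.prod_append, List.map_cons, List.prod_cons]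
  have hk'i : ∀ i : Fin r, i ≠ j → k' i = k i := by
    intro i hi
    rw [hk'def]
    simp [Pi.single_eq_of_ne hi]
  have hkj : k' j = k j + c := by rw [hk'def]; simp
  have hc1 : (L1.map fun i => genPow sqq Q i (k' i)).prod = A := by
    rw [hA]
    congr 1
    exact List.map_congr_left fun i hi => by rw [hk'i i (hmem1 i hi)]
  have hc2 : (L2.map fun i => genPow sqq Q i (k' i)).prod = B := by
    rw [hB]
    congr 1
    exact List.map_congr_left fun i hi => by rw [hk'i i (hmem2 i hi)]
  set Sig1 : ℤ := (L1.map fun i => quantumPairing Q (Pi.single j c) (k i • Pi.single i 1)).sum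
    with hSig
  have hstep : qtGen sqq Q s * (A * (genPow sqq Q j (k j) * B))
      = ((sqq ^ (2 * Sig1) : Rˣ) : R) • (A * (genPow sqq Q j (k j + c) * B)) := by
    rw [← mul_assoc, hA, qtPull sqq Q hQ s k L1, hwt, smul_mul_assoc, mul_assoc,
      ← mul_assoc (qtGen sqq Q s), hmerge (k j)]
  -- assemble
  rw [QuantumTorus.monomial, QuantumTorus.monomial, hsplitP k, hsplitP k', hc1, hc2, hkj,
    ← hA, ← hB, mul_smul_comm, hstep, smul_smul, qtu_mul, smul_smul, qtu_mul]
  have hlist : Sig1 = ∑ i ∈ Finset.univ.filter (fun i => i < j),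
      quantumPairing Q (Pi.single j c) (k i • Pi.single i 1) := by
    rw [hSig, hL1, ← List.sum_toFinset _ (List.Nodup.filter _ (List.nodup_finRange r))]
    congr 1
    rw [List.toFinset_filter, List.toFinset_finRange]
    simp
  have hkey := qtKey Q hQ j c k
  rw [← hlist] at hkey
  have hexp : -quantumUpperSum Q k + 2 * Sig1
      = quantumPairing Q (Pi.single j c) k + -quantumUpperSum Q k' := by
    rw [hk'def]
    omega
  rw [hexp]

theorem qtCore (hQ : Qᵀ = -Q) (s : Fin r ⊕ Fin r) (k : Fin r → ℤ) :
    qtGen sqq Q s * QuantumTorus.monomial sqq Q k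
      = ((sqq ^ quantumPairing Q (qtWt s) k : Rˣ) : R)
          • QuantumTorus.monomial sqq Q (k + qtWt s) := by
  cases s with
  | inl j =>
    have hwt : qtWt (Sum.inl j : Fin r ⊕ Fin r) = (Pi.single j (1 : ℤ) : Fin r → ℤ) := rfl
    rw [hwt]
    exact qtCoreAux sqq Q hQ (Sum.inl j) j 1 hwt (fun a => qtGenPow_succ sqq Q j a) k
  | inr j =>
    have hwt : qtWt (Sum.inr j : Fin r ⊕ Fin r) = (Pi.single j (-1 : ℤ) : Fin r → ℤ) := by
      rw [show qtWt (Sum.inr j : Fin r ⊕ Fin r) = -(Pi.single j 1 : Fin r → ℤ) from rfl,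
        ← qtSingle_smul j (-1)]
      simp
    rw [hwt]
    exact qtCoreAux sqq Q hQ (Sum.inr j) j (-1) hwt (fun a => qtGenPow_pred sqq Q j a) k

end Core
section Phi

open QuantumTorus

variable {R : Type} [CommRing R] (sqq : Rˣ) {r : ℕ} (Q : Matrix (Fin r) (Fin r) ℤ)

noncomputable def qtPhiFree : FreeAlgebra R (Fin r ⊕ Fin r) →ₐ[R] Module.End R (QTMod R r) :=
  FreeAlgebra.lift R (fun s => qtT sqq Q (qtWt s))

theorem qtPhiFree_ι (s : Fin r ⊕ Fin r) :
    qtPhiFree sqq Q (FreeAlgebra.ι R s) = qtT sqq Q (qtWt s) := by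
  simp [qtPhiFree]

theorem qtPhiRel (hQ : Qᵀ = -Q) ⦃x y : FreeAlgebra R (Fin r ⊕ Fin r)⦄
    (h : QTRel R sqq Q x y) : qtPhiFree sqq Q x = qtPhiFree sqq Q y := by
  induction h with
  | mul_inv i =>
    rw [map_mul, map_one, qtPhiFree_ι, qtPhiFree_ι]
    show qtT sqq Q (Pi.single i 1) * qtT sqq Q (-Pi.single i 1) = 1
    rw [qtT_mul]
    have h1 : quantumPairing Q (Pi.single i 1) (-Pi.single i 1) = 0 := by
      rw [quantumPairing_neg_right, quantumPairing_single_single, qtQ_diag Q hQ]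
      ring
    have h2 : (Pi.single i 1 : Fin r → ℤ) + -Pi.single i 1 = 0 := by abel
    rw [h1, h2, qtT_zero, zpow_zero]
    simp
  | inv_mul i =>
    rw [map_mul, map_one, qtPhiFree_ι, qtPhiFree_ι]
    show qtT sqq Q (-Pi.single i 1) * qtT sqq Q (Pi.single i 1) = 1
    rw [qtT_mul]
    have h1 : quantumPairing Q (-Pi.single i 1) (Pi.single i 1) = 0 := by
      rw [quantumPairing_neg_left, quantumPairing_single_single, qtQ_diag Q hQ]
      ring
    have h2 : (-Pi.single i 1 : Fin r → ℤ) + Pi.single i 1 = 0 := by abel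
    rw [h1, h2, qtT_zero, zpow_zero]
    simp
  | qcomm i j =>
    rw [map_mul, map_smul, map_mul, qtPhiFree_ι, qtPhiFree_ι]
    show qtT sqq Q (Pi.single i 1) * qtT sqq Q (Pi.single j 1)
      = ((sqq ^ (2 * Q i j) : Rˣ) : R)
          • (qtT sqq Q (Pi.single j 1) * qtT sqq Q (Pi.single i 1))
    rw [qtT_mul, qtT_mul, smul_smul, qtu_mul]
    have h1 : quantumPairing Q (Pi.single i (1:ℤ)) (Pi.single j 1) = Q i j := by
      rw [quantumPairing_single_single]; ring
    have h2 : quantumPairing Q (Pi.single j (1:ℤ)) (Pi.single i 1) = -Q i j := by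
      rw [quantumPairing_single_single, qtQ_antisymm Q hQ i j]; ring
    have h3 : (Pi.single j 1 : Fin r → ℤ) + Pi.single i 1
        = Pi.single i 1 + Pi.single j 1 := by abel
    rw [h1, h2, h3]
    congr 2
    ring

noncomputable def qtPhi (hQ : Qᵀ = -Q) :
    QuantumTorus R sqq Q →ₐ[R] Module.End R (QTMod R r) :=
  RingQuot.liftAlgHom R ⟨qtPhiFree sqq Q, qtPhiRel sqq Q hQ⟩

theorem qtGen_eq_mk (s : Fin r ⊕ Fin r) :
    qtGen sqq Q s
      = RingQuot.mkAlgHom R (QTRel R sqq Q) (FreeAlgebra.ι R s) := by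
  cases s <;> rfl

theorem qtPhi_mk (hQ : Qᵀ = -Q) (x : FreeAlgebra R (Fin r ⊕ Fin r)) :
    qtPhi sqq Q hQ (RingQuot.mkAlgHom R (QTRel R sqq Q) x) = qtPhiFree sqq Q x :=
  RingQuot.liftAlgHom_mkAlgHom_apply R (qtPhiFree sqq Q) (qtPhiRel sqq Q hQ) x

theorem qtPhi_gen (hQ : Qᵀ = -Q) (s : Fin r ⊕ Fin r) :
    qtPhi sqq Q hQ (qtGen sqq Q s) = qtT sqq Q (qtWt s) := by
  rw [qtGen_eq_mk, qtPhi_mk, qtPhiFree_ι]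

theorem qtMonomial_zero : QuantumTorus.monomial sqq Q (0 : Fin r → ℤ) = 1 := by
  rw [QuantumTorus.monomial]
  have h1 : quantumUpperSum Q 0 = 0 := by
    rw [quantumUpperSum]
    refine Finset.sum_eq_zero fun i _ => Finset.sum_eq_zero fun j _ => ?_
    split <;> simp
  have h2 : ((List.finRange r).map fun i => genPow sqq Q i ((0 : Fin r → ℤ) i)).prod = 1 := by
    apply List.prod_eq_one
    intro x hx
    obtain ⟨i, _, rfl⟩ := List.mem_map.mp hx
    simp [genPow]
  rw [h1, h2]
  simp

/-- Combined word lemma: each word is a unit multiple of a normalized monomial,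
compatibly on both sides. -/
theorem qtWord (hQ : Qᵀ = -Q) (l : List (Fin r ⊕ Fin r)) :
    ∃ t : ℤ,
      qtPhi sqq Q hQ ((l.map (qtGen sqq Q)).prod)
        = ((sqq ^ t : Rˣ) : R) • qtT sqq Q ((l.map qtWt).sum)
      ∧ (l.map (qtGen sqq Q)).prod
        = ((sqq ^ t : Rˣ) : R) • QuantumTorus.monomial sqq Q ((l.map qtWt).sum) := by
  induction l with
  | nil =>
    refine ⟨0, ?_, ?_⟩
    · simp only [List.map_nil, List.prod_nil, List.sum_nil, map_one, qtT_zero, zpow_zero]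
      simp
    · simp only [List.map_nil, List.prod_nil, List.sum_nil, qtMonomial_zero, zpow_zero]
      simp
  | cons s l ih =>
    obtain ⟨t, h1, h2⟩ := ih
    refine ⟨t + quantumPairing Q (qtWt s) ((l.map qtWt).sum), ?_, ?_⟩
    · simp only [List.map_cons, List.prod_cons, List.sum_cons, map_mul, qtPhi_gen, h1]
      rw [mul_smul_comm, qtT_mul, smul_smul, qtu_mul]
    · simp only [List.map_cons, List.prod_cons, List.sum_cons, h2]
      rw [mul_smul_comm, qtCore sqq Q hQ s ((l.map qtWt).sum), smul_smul, qtu_mul]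
      have hcom : (l.map qtWt).sum + qtWt s = qtWt s + (l.map qtWt).sum := by abel
      rw [hcom]

/-- Words span the quantum torus. -/
theorem qtSpan (x : QuantumTorus R sqq Q) :
    x ∈ Submodule.span R
      (Set.range fun l : List (Fin r ⊕ Fin r) => (l.map (qtGen sqq Q)).prod) := by
  set S := Set.range fun l : List (Fin r ⊕ Fin r) => (l.map (qtGen sqq Q)).prod with hS
  have hmulS : ∀ x ∈ Submodule.span R S, ∀ y ∈ Submodule.span R S,
      x * y ∈ Submodule.span R S := by
    intro x hx
    induction hx using Submodule.span_induction with
    | mem x hxS =>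
      intro y hy
      induction hy using Submodule.span_induction with
      | mem y hyS =>
        obtain ⟨l, rfl⟩ := hxS
        obtain ⟨l', rfl⟩ := hyS
        apply Submodule.subset_span
        exact ⟨l ++ l', by simp⟩
      | zero => rw [mul_zero]; exact Submodule.zero_mem _
      | add y z _ _ hy hz => rw [mul_add]; exact Submodule.add_mem _ hy hz
      | smul c y _ hy => rw [mul_smul_comm]; exact Submodule.smul_mem _ c hy
    | zero => intro y hy; rw [zero_mul]; exact Submodule.zero_mem _
    | add x z _ _ hx hz => intro y hy; rw [add_mul]; exact Submodule.add_mem _ (hx y hy) (hz y hy)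
    | smul c x _ hx => intro y hy; rw [smul_mul_assoc]; exact Submodule.smul_mem _ c (hx y hy)
  obtain ⟨y, rfl⟩ := RingQuot.mkAlgHom_surjective R (QTRel R sqq Q) x
  induction y using FreeAlgebra.induction with
  | grade0 c =>
    rw [AlgHom.commutes, Algebra.algebraMap_eq_smul_one]
    exact Submodule.smul_mem _ c (Submodule.subset_span ⟨[], by simp; rfl⟩)
  | grade1 s =>
    rw [← qtGen_eq_mk]
    exact Submodule.subset_span ⟨[s], by simp⟩
  | mul a b ha hb => rw [map_mul]; exact hmulS _ ha _ hb
  | add a b ha hb => rw [map_add]; exact Submodule.add_mem _ ha hb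

end Phi
section Inj

open QuantumTorus

variable {R : Type} [CommRing R] (sqq : Rˣ) {r : ℕ} (Q : Matrix (Fin r) (Fin r) ℤ)

noncomputable def qtPsi : ((Fin r → ℤ) →₀ R) →ₗ[R] QuantumTorus R sqq Q :=
  Finsupp.linearCombination R (QuantumTorus.monomial sqq Q)

theorem qtPsi_single (k : Fin r → ℤ) (c : R) :
    qtPsi sqq Q (Finsupp.single k c) = c • QuantumTorus.monomial sqq Q k := by
  simp [qtPsi]

theorem qtPsi_phi (hQ : Qᵀ = -Q) (x : QuantumTorus R sqq Q) :
    qtPsi sqq Q (qtEv (qtPhi sqq Q hQ x)) = x := by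
  have h := qtSpan sqq Q x
  induction h using Submodule.span_induction with
  | mem y hy =>
    obtain ⟨l, rfl⟩ := hy
    obtain ⟨t, h1, h2⟩ := qtWord sqq Q hQ l
    rw [h1, map_smul, qtEv_qtT, map_smul, qtPsi_single, smul_smul, mul_one, ← h2]
  | zero => simp
  | add a b _ _ ha hb => rw [map_add, map_add, map_add, ha, hb]
  | smul c a _ ha => rw [map_smul, map_smul, map_smul, ha]

theorem qtPhi_inj (hQ : Qᵀ = -Q) : Function.Injective (qtPhi sqq Q hQ) := by
  intro a b h
  rw [← qtPsi_phi sqq Q hQ a, ← qtPsi_phi sqq Q hQ b, h]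

theorem qtPhi_mem_range (hQ : Qᵀ = -Q) (x : QuantumTorus R sqq Q) :
    qtPhi sqq Q hQ x ∈ LinearMap.range (qtTheta sqq Q) := by
  have h := qtSpan sqq Q x
  induction h using Submodule.span_induction with
  | mem y hy =>
    obtain ⟨l, rfl⟩ := hy
    obtain ⟨t, h1, _⟩ := qtWord sqq Q hQ l
    rw [h1]
    exact ⟨Finsupp.single ((l.map qtWt).sum) ((sqq ^ t : Rˣ) : R),
      qtTheta_single sqq Q _ _⟩
  | zero => rw [map_zero]; exact Submodule.zero_mem _
  | add a b _ _ ha hb => rw [map_add]; exact Submodule.add_mem _ ha hb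
  | smul c a _ ha => rw [map_smul]; exact Submodule.smul_mem _ c ha

end Inj

section QTDomain

open QuantumTorus

variable {R : Type} [Field R] (sqq : Rˣ) {r : ℕ} (Q : Matrix (Fin r) (Fin r) ℤ)
  (hQ : Qᵀ = -Q)
include hQ

theorem qtPhi_coord (x : QuantumTorus R sqq Q) :
    qtPhi sqq Q hQ x = qtTheta sqq Q (qtEv (qtPhi sqq Q hQ x)) := by
  obtain ⟨f, hf⟩ := qtPhi_mem_range sqq Q hQ x
  rw [← hf, qtEv_theta]

theorem qtPhi_ne_zero {x : QuantumTorus R sqq Q} (hx : x ≠ 0) :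
    qtEv (qtPhi sqq Q hQ x) ≠ 0 := by
  intro h
  apply hx
  apply qtPhi_inj sqq Q hQ
  rw [map_zero, qtPhi_coord sqq Q hQ x, h, map_zero]

theorem qtQT_mul_ne_zero {a b : QuantumTorus R sqq Q} (ha : a ≠ 0) (hb : b ≠ 0) :
    a * b ≠ 0 := by
  intro h
  have h1 : qtPhi sqq Q hQ a * qtPhi sqq Q hQ b = 0 := by
    rw [← map_mul, h, map_zero]
  rw [qtPhi_coord sqq Q hQ a, qtPhi_coord sqq Q hQ b] at h1
  exact qtTheta_mul_ne_zero sqq Q (qtPhi_ne_zero sqq Q hQ ha) (qtPhi_ne_zero sqq Q hQ hb) h1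

end QTDomain
section PhiPsi

open QuantumTorus

variable {R : Type} [CommRing R] (sqq : Rˣ) {r : ℕ} (Q : Matrix (Fin r) (Fin r) ℤ)

theorem qtWordFor_single (i : Fin r) (a : ℤ) :
    ∃ l : List (Fin r ⊕ Fin r), (l.map (qtWt (r := r))).sum = Pi.single i a := by
  by_cases h : 0 ≤ a
  · refine ⟨List.replicate a.toNat (Sum.inl i), ?_⟩
    rw [List.map_replicate, List.sum_replicate]
    show a.toNat • (Pi.single i 1 : Fin r → ℤ) = _
    rw [← Int.toNat_of_nonneg h, ← qtSingle_smul i (a.toNat : ℤ), natCast_zsmul]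
    simp [max_eq_left h]
  · refine ⟨List.replicate (-a).toNat (Sum.inr i), ?_⟩
    rw [List.map_replicate, List.sum_replicate]
    show (-a).toNat • (-(Pi.single i 1) : Fin r → ℤ) = _
    rw [← qtSingle_smul i a]
    have : (((-a).toNat : ℤ)) = -a := Int.toNat_of_nonneg (by omega)
    rw [← natCast_zsmul, this]
    rw [smul_neg, ← neg_smul]
    ring_nf

theorem qtWordFor (k : Fin r → ℤ) :
    ∃ l : List (Fin r ⊕ Fin r), (l.map (qtWt (r := r))).sum = k := by
  have hlist : ∀ L : List (Fin r), ∃ l : List (Fin r ⊕ Fin r),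
      (l.map (qtWt (r := r))).sum = (L.map fun i => Pi.single i (k i)).sum := by
    intro L
    induction L with
    | nil => exact ⟨[], by simp⟩
    | cons i L ih =>
      obtain ⟨l, hl⟩ := ih
      obtain ⟨l', hl'⟩ := qtWordFor_single (r := r) i (k i)
      exact ⟨l' ++ l, by rw [List.map_append, List.sum_append, hl, hl']; simp⟩
  obtain ⟨l, hl⟩ := hlist (List.finRange r)
  refine ⟨l, ?_⟩
  rw [hl, ← Fin.sum_univ_def (fun i => Pi.single i (k i)), Finset.univ_sum_single]

theorem qtPhi_monomial (hQ : Qᵀ = -Q) (k : Fin r → ℤ) :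
    qtPhi sqq Q hQ (QuantumTorus.monomial sqq Q k) = qtT sqq Q k := by
  obtain ⟨l, hl⟩ := qtWordFor (r := r) k
  obtain ⟨t, h1, h2⟩ := qtWord sqq Q hQ l
  rw [hl] at h1 h2
  rw [h2, map_smul] at h1
  have hu : (sqq ^ t : Rˣ) • qtPhi sqq Q hQ (QuantumTorus.monomial sqq Q k)
      = (sqq ^ t : Rˣ) • qtT sqq Q k := by
    rw [Units.smul_def, Units.smul_def]
    exact h1
  exact smul_left_cancel _ hu

theorem qtPhi_psi (hQ : Qᵀ = -Q) (f : (Fin r → ℤ) →₀ R) :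
    qtPhi sqq Q hQ (qtPsi sqq Q f) = qtTheta sqq Q f := by
  induction f using Finsupp.induction_linear with
  | zero => simp
  | add f g hf hg => rw [map_add, map_add, map_add, hf, hg]
  | single k c => rw [qtPsi_single, qtTheta_single, map_smul, qtPhi_monomial]

end PhiPsi
section Boxes

/-- The box of side `2n+1` in `Fin r → ℤ`. -/
noncomputable def qtBox (r n : ℕ) : Finset (Fin r → ℤ) :=
  Finset.Icc (fun _ => -(n : ℤ)) (fun _ => (n : ℤ))

theorem qtBox_mem {r n : ℕ} {k : Fin r → ℤ} :
    k ∈ qtBox r n ↔ ∀ i, -(n : ℤ) ≤ k i ∧ k i ≤ n := by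
  simp only [qtBox, Finset.mem_Icc, Pi.le_def]
  constructor
  · rintro ⟨h1, h2⟩ i; exact ⟨h1 i, h2 i⟩
  · intro h; exact ⟨fun i => (h i).1, fun i => (h i).2⟩

theorem qtBox_card (r n : ℕ) : (qtBox r n).card = (2 * n + 1) ^ r := by
  rw [qtBox, Pi.card_Icc]
  have : ∀ i : Fin r, (Finset.Icc (-(n:ℤ)) (n:ℤ)).card = 2 * n + 1 := by
    intro i
    rw [Int.card_Icc]
    omega
  rw [Finset.prod_congr rfl fun i _ => this i, Finset.prod_const, Finset.card_univ,
    Fintype.card_fin]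

theorem qtBox_add {r n d : ℕ} {a b : Fin r → ℤ} (ha : a ∈ qtBox r n) (hb : b ∈ qtBox r d) :
    a + b ∈ qtBox r (n + d) := by
  rw [qtBox_mem] at ha hb ⊢
  intro i
  have h1 := ha i
  have h2 := hb i
  constructor <;> [skip; skip] <;> simp only [Pi.add_apply] <;> push_cast <;> omega

theorem qtBox_exists {r : ℕ} {R : Type} [CommRing R] (f : (Fin r → ℤ) →₀ R) :
    ∃ d : ℕ, ∀ k ∈ f.support, k ∈ qtBox r d := by
  classical
  set F : (Fin r → ℤ) → ℕ := fun k0 => Finset.univ.sup fun i => (k0 i).natAbs with hF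
  refine ⟨f.support.sup F, ?_⟩
  intro k hk
  rw [qtBox_mem]
  intro i
  have h1 : (k i).natAbs ≤ F k := Finset.le_sup (f := fun j => (k j).natAbs) (Finset.mem_univ i)
  have h2 : F k ≤ f.support.sup F := Finset.le_sup hk
  omega

theorem qtNat_aux (m c : ℕ) : ∀ r : ℕ, (m + c) ^ (r + 1) ≤ m ^ (r + 1) + (r + 1) * c * (m + c) ^ r := by
  intro r
  induction r with
  | zero => simp
  | succ s ih =>
    calc (m + c) ^ (s + 2) = (m + c) ^ (s + 1) * (m + c) := by ring
      _ ≤ (m ^ (s + 1) + (s + 1) * c * (m + c) ^ s) * (m + c) := Nat.mul_le_mul_right _ ih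
      _ = m ^ (s+1) * m + c * m ^ (s+1) + (s + 1) * c * ((m + c) ^ s * (m + c)) := by ring
      _ ≤ m ^ (s+1) * m + c * (m+c) ^ (s+1) + (s + 1) * c * (m + c) ^ (s+1) := by
          have h1 : m ^ (s+1) ≤ (m + c) ^ (s+1) := Nat.pow_le_pow_left (by omega) _
          have h2 : (m + c) ^ s * (m + c) = (m + c)^(s+1) := by ring
          rw [h2]
          have := Nat.mul_le_mul_left c h1
          omega
      _ = m ^ (s + 2) + (s + 2) * c * (m + c) ^ (s + 1) := by ring

theorem qtNat (r c : ℕ) : ∃ n : ℕ, (2 * (n + c) + 1) ^ r < 2 * (2 * n + 1) ^ r := by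
  cases r with
  | zero => exact ⟨0, by norm_num⟩
  | succ s =>
    refine ⟨(s + 1) * (2 * c) * 2 ^ (s + 1) + c, ?_⟩
    set n := (s + 1) * (2 * c) * 2 ^ (s + 1) + c with hn
    set m := 2 * n + 1 with hm
    have hm2c : 2 * c ≤ m := by omega
    have hkey : (s + 1) * (2 * c) * 2 ^ s < m := by
      have hle : (2:ℕ) ^ s ≤ 2 ^ (s + 1) := Nat.pow_le_pow_right (by omega) (by omega)
      have : (s + 1) * (2 * c) * 2 ^ s ≤ (s + 1) * (2 * c) * 2 ^ (s + 1) :=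
        Nat.mul_le_mul_left _ hle
      omega
    have heq : 2 * (n + c) + 1 = m + 2 * c := by omega
    rw [heq]
    have haux := qtNat_aux m (2 * c) s
    have hb1 : (m + 2 * c) ^ s ≤ (2 * m) ^ s := Nat.pow_le_pow_left (by omega) s
    have hb2 : (2 * m) ^ s = 2 ^ s * m ^ s := by rw [Nat.mul_pow]
    have hb3 : (s + 1) * (2 * c) * (m + 2*c) ^ s ≤ ((s + 1) * (2 * c) * 2 ^ s) * m ^ s := by
      calc (s + 1) * (2 * c) * (m + 2*c) ^ s ≤ (s + 1) * (2 * c) * (2 ^ s * m ^ s) := by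
            rw [← hb2]; exact Nat.mul_le_mul_left _ hb1
        _ = ((s + 1) * (2 * c) * 2 ^ s) * m ^ s := by ring
    have hb4 : ((s + 1) * (2 * c) * 2 ^ s) * m ^ s < m * m ^ s :=
      mul_lt_mul_of_pos_right hkey (pow_pos (by omega) s)
    have hb5 : m * m ^ s = m ^ (s + 1) := by ring
    calc (m + 2*c) ^ (s+1) ≤ m ^ (s+1) + (s+1) * (2*c) * (m + 2*c) ^ s := haux
      _ < m ^ (s+1) + m ^ (s+1) := by omega
      _ = 2 * m ^ (s+1) := by ring
end Boxes
section Count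

theorem qtBox_mono {r n m : ℕ} (h : n ≤ m) : qtBox r n ⊆ qtBox r m := by
  intro k hk
  rw [qtBox_mem] at hk ⊢
  intro i
  have := hk i
  constructor <;> [skip; skip] <;> push_cast <;> omega

variable {R : Type} [Field R] (sqq : Rˣ) {r : ℕ} (Q : Matrix (Fin r) (Fin r) ℤ)

noncomputable def qtSuppEquiv (t : Finset (Fin r → ℤ)) :
    ↥(Finsupp.supported R R (↑t : Set (Fin r → ℤ))) ≃ₗ[R] (↥(↑t : Set (Fin r → ℤ)) → R) :=
  (Finsupp.supportedEquivFinsupp (↑t : Set (Fin r → ℤ))).trans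
    (Finsupp.linearEquivFunOnFinite R R _)

theorem qtSupported_fd (t : Finset (Fin r → ℤ)) :
    FiniteDimensional R ↥(Finsupp.supported R R (↑t : Set (Fin r → ℤ))) :=
  LinearEquiv.finiteDimensional (qtSuppEquiv (R := R) t).symm

theorem qtSupported_finrank (t : Finset (Fin r → ℤ)) :
    Module.finrank R ↥(Finsupp.supported R R (↑t : Set (Fin r → ℤ))) = t.card := by
  rw [LinearEquiv.finrank_eq (qtSuppEquiv (R := R) t), Module.finrank_pi]
  exact Fintype.card_coe t

/-- The abstract dimension-counting lemma giving common multiples. -/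
theorem qtCount (d : ℕ)
    (Fa Fg : QTMod R r →ₗ[R] QTMod R r)
    (hia : Function.Injective Fa) (hig : Function.Injective Fg)
    (hba : ∀ (n : ℕ) (h : QTMod R r), (↑h.support : Set (Fin r → ℤ)) ⊆ ↑(qtBox r n) →
      (↑(Fa h).support : Set (Fin r → ℤ)) ⊆ ↑(qtBox r (n + d)))
    (hbg : ∀ (n : ℕ) (h : QTMod R r), (↑h.support : Set (Fin r → ℤ)) ⊆ ↑(qtBox r n) →
      (↑(Fg h).support : Set (Fin r → ℤ)) ⊆ ↑(qtBox r (n + d))) :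
    ∃ u v : QTMod R r, u ≠ 0 ∧ Fa u = Fg v := by
  classical
  obtain ⟨n, hn⟩ := qtNat r d
  set W : ℕ → Submodule R (QTMod R r) :=
    fun m => Finsupp.supported R R (↑(qtBox r m) : Set (Fin r → ℤ)) with hW
  haveI fd1 : FiniteDimensional R ↥(W n) := qtSupported_fd _
  haveI fd2 : FiniteDimensional R ↥(W (n + d)) := qtSupported_fd _
  set La : Submodule R (QTMod R r) := (W n).map Fa with hLa
  set Lg : Submodule R (QTMod R r) := (W n).map Fg with hLg
  haveI fdLa : FiniteDimensional R ↥La := Module.Finite.map _ _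
  haveI fdLg : FiniteDimensional R ↥Lg := Module.Finite.map _ _
  have hWn : ∀ m : ℕ, Module.finrank R ↥(W m) = (2 * m + 1) ^ r := fun m =>
    (qtSupported_finrank (R := R) (qtBox r m)).trans (qtBox_card r m)
  have hra : Module.finrank R ↥La = (2 * n + 1) ^ r := by
    have h1 : Module.finrank R ↥(W n) = Module.finrank R ↥La :=
      LinearEquiv.finrank_eq (Submodule.equivMapOfInjective Fa hia (W n))
    rw [← h1, hWn]
  have hrg : Module.finrank R ↥Lg = (2 * n + 1) ^ r := by
    have h1 : Module.finrank R ↥(W n) = Module.finrank R ↥Lg :=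
      LinearEquiv.finrank_eq (Submodule.equivMapOfInjective Fg hig (W n))
    rw [← h1, hWn]
  have hsubA : La ≤ W (n + d) := by
    rintro x ⟨h, hh, rfl⟩
    simp only [hW, Finsupp.mem_supported] at hh ⊢
    exact hba n h hh
  have hsubG : Lg ≤ W (n + d) := by
    rintro x ⟨h, hh, rfl⟩
    simp only [hW, Finsupp.mem_supported] at hh ⊢
    exact hbg n h hh
  have hsup : Module.finrank R ↥(La ⊔ Lg) ≤ (2 * (n + d) + 1) ^ r := by
    have h1 : La ⊔ Lg ≤ W (n + d) := sup_le hsubA hsubG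
    have h2 := Submodule.finrank_mono h1
    rw [hWn] at h2
    exact h2
  have hsum := Submodule.finrank_sup_add_finrank_inf_eq La Lg
  rw [hra, hrg] at hsum
  have hpos : 0 < Module.finrank R ↥(La ⊓ Lg) := by omega
  haveI fdint : FiniteDimensional R ↥(La ⊓ Lg) :=
    Submodule.finiteDimensional_of_le (inf_le_left : La ⊓ Lg ≤ La)
  haveI : Nontrivial ↥(La ⊓ Lg) := Module.nontrivial_of_finrank_pos hpos
  obtain ⟨z, hz⟩ := exists_ne (0 : ↥(La ⊓ Lg))
  have hz1 : (z : QTMod R r) ≠ 0 := fun h => hz (Subtype.ext h)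
  have hzmem := z.2
  rw [Submodule.mem_inf] at hzmem
  obtain ⟨u, _, hu⟩ := hzmem.1
  obtain ⟨v, _, hv⟩ := hzmem.2
  refine ⟨u, v, ?_, by rw [hu, hv]⟩
  intro h0
  rw [h0, map_zero] at hu
  exact hz1 hu.symm

end Count
section OreQT

open QuantumTorus

variable {R : Type} [Field R] (sqq : Rˣ) {r : ℕ} (Q : Matrix (Fin r) (Fin r) ℤ)

/-- right multiplication by `θ f` in coordinates -/
noncomputable def qtFR (f : QTMod R r) : QTMod R r →ₗ[R] QTMod R r :=
  qtEv ∘ₗ (LinearMap.mulRight R (qtTheta sqq Q f)) ∘ₗ (qtTheta sqq Q)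

/-- left multiplication by `θ f` in coordinates -/
noncomputable def qtFL (f : QTMod R r) : QTMod R r →ₗ[R] QTMod R r :=
  qtEv ∘ₗ (LinearMap.mulLeft R (qtTheta sqq Q f)) ∘ₗ (qtTheta sqq Q)

theorem qtFR_apply (f h : QTMod R r) : qtFR sqq Q f h = qtTheta sqq Q h f := by
  show qtEv (qtTheta sqq Q h * qtTheta sqq Q f) = _
  rw [qtTheta_mul, qtEv_theta]

theorem qtFL_apply (f h : QTMod R r) : qtFL sqq Q f h = qtTheta sqq Q f h := by
  show qtEv (qtTheta sqq Q f * qtTheta sqq Q h) = _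
  rw [qtTheta_mul, qtEv_theta]

theorem qtFR_theta (f h : QTMod R r) :
    qtTheta sqq Q (qtFR sqq Q f h) = qtTheta sqq Q h * qtTheta sqq Q f := by
  rw [qtFR_apply, ← qtTheta_mul]

theorem qtFL_theta (f h : QTMod R r) :
    qtTheta sqq Q (qtFL sqq Q f h) = qtTheta sqq Q f * qtTheta sqq Q h := by
  rw [qtFL_apply, ← qtTheta_mul]

theorem qtFR_inj {f : QTMod R r} (hf : f ≠ 0) : Function.Injective (qtFR sqq Q f) := by
  have : ∀ h : QTMod R r, qtFR sqq Q f h = 0 → h = 0 := by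
    intro h h0
    by_contra hne
    have := qtTheta_mul_ne_zero sqq Q hne hf
    apply this
    rw [← qtFR_theta, h0, map_zero]
  intro h1 h2 heq
  have : qtFR sqq Q f (h1 - h2) = 0 := by rw [map_sub, heq, sub_self]
  have := this
  rw [← sub_eq_zero]
  exact ‹∀ h, qtFR sqq Q f h = 0 → h = 0› _ this

theorem qtFL_inj {f : QTMod R r} (hf : f ≠ 0) : Function.Injective (qtFL sqq Q f) := by
  have hz : ∀ h : QTMod R r, qtFL sqq Q f h = 0 → h = 0 := by
    intro h h0
    by_contra hne
    have := qtTheta_mul_ne_zero sqq Q hf hne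
    apply this
    rw [← qtFL_theta, h0, map_zero]
  intro h1 h2 heq
  have h0 : qtFL sqq Q f (h1 - h2) = 0 := by rw [map_sub, heq, sub_self]
  rw [← sub_eq_zero]
  exact hz _ h0

theorem qtFR_bound {f : QTMod R r} {d : ℕ}
    (hfd : ∀ k ∈ f.support, k ∈ qtBox r d) (n : ℕ) (h : QTMod R r)
    (hh : (↑h.support : Set (Fin r → ℤ)) ⊆ ↑(qtBox r n)) :
    (↑(qtFR sqq Q f h).support : Set (Fin r → ℤ)) ⊆ ↑(qtBox r (n + d)) := by
  intro k hk
  simp only [Finset.mem_coe, Finsupp.mem_support_iff] at hk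
  rw [qtFR_apply] at hk
  obtain ⟨a, ha, b, hb, rfl⟩ := qtMul_support sqq Q h f _ hk
  exact Finset.mem_coe.mpr (qtBox_add (Finset.mem_coe.mp (hh (Finset.mem_coe.mpr ha))) (hfd b hb))

theorem qtFL_bound {f : QTMod R r} {d : ℕ}
    (hfd : ∀ k ∈ f.support, k ∈ qtBox r d) (n : ℕ) (h : QTMod R r)
    (hh : (↑h.support : Set (Fin r → ℤ)) ⊆ ↑(qtBox r n)) :
    (↑(qtFL sqq Q f h).support : Set (Fin r → ℤ)) ⊆ ↑(qtBox r (n + d)) := by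
  intro k hk
  simp only [Finset.mem_coe, Finsupp.mem_support_iff] at hk
  rw [qtFL_apply] at hk
  obtain ⟨a, ha, b, hb, rfl⟩ := qtMul_support sqq Q f h _ hk
  have : b + a ∈ qtBox r (n + d) :=
    qtBox_add (Finset.mem_coe.mp (hh (Finset.mem_coe.mpr hb))) (hfd a ha)
  have hcomm : a + b = b + a := by abel
  rw [hcomm]
  exact Finset.mem_coe.mpr this

variable (hQ : Qᵀ = -Q)
include hQ

theorem qtOre_left (a s : QuantumTorus R sqq Q) (hs : s ≠ 0) :
    ∃ a' s' : QuantumTorus R sqq Q, s' ≠ 0 ∧ s' * a = a' * s := by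
  by_cases ha : a = 0
  · exact ⟨0, s, hs, by rw [ha, mul_zero, zero_mul]⟩
  · set f := qtEv (qtPhi sqq Q hQ a) with hfdef
    set g := qtEv (qtPhi sqq Q hQ s) with hgdef
    have hf : f ≠ 0 := qtPhi_ne_zero sqq Q hQ ha
    have hg : g ≠ 0 := qtPhi_ne_zero sqq Q hQ hs
    obtain ⟨da, hda⟩ := qtBox_exists f
    obtain ⟨dg, hdg⟩ := qtBox_exists g
    set d := max da dg with hd
    have hda' : ∀ k ∈ f.support, k ∈ qtBox r d :=
      fun k hk => qtBox_mono (le_max_left da dg) (hda k hk)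
    have hdg' : ∀ k ∈ g.support, k ∈ qtBox r d :=
      fun k hk => qtBox_mono (le_max_right da dg) (hdg k hk)
    obtain ⟨u, v, hu, heq⟩ := qtCount d (qtFR sqq Q f) (qtFR sqq Q g)
      (qtFR_inj sqq Q hf) (qtFR_inj sqq Q hg)
      (fun n h hh => qtFR_bound sqq Q hda' n h hh)
      (fun n h hh => qtFR_bound sqq Q hdg' n h hh)
    refine ⟨qtPsi sqq Q v, qtPsi sqq Q u, ?_, ?_⟩
    · intro h0
      apply hu
      apply qtTheta_injective sqq Q
      rw [← qtPhi_psi sqq Q hQ, h0, map_zero, map_zero]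
    · apply qtPhi_inj sqq Q hQ
      rw [map_mul, map_mul, qtPhi_psi, qtPhi_psi,
        qtPhi_coord sqq Q hQ a, qtPhi_coord sqq Q hQ s, ← hfdef, ← hgdef,
        ← qtFR_theta, ← qtFR_theta, heq]

theorem qtOre_right (a s : QuantumTorus R sqq Q) (hs : s ≠ 0) :
    ∃ a' s' : QuantumTorus R sqq Q, s' ≠ 0 ∧ a * s' = s * a' := by
  by_cases ha : a = 0
  · exact ⟨0, s, hs, by rw [ha, mul_zero, zero_mul]⟩
  · set f := qtEv (qtPhi sqq Q hQ a) with hfdef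
    set g := qtEv (qtPhi sqq Q hQ s) with hgdef
    have hf : f ≠ 0 := qtPhi_ne_zero sqq Q hQ ha
    have hg : g ≠ 0 := qtPhi_ne_zero sqq Q hQ hs
    obtain ⟨da, hda⟩ := qtBox_exists f
    obtain ⟨dg, hdg⟩ := qtBox_exists g
    set d := max da dg with hd
    have hda' : ∀ k ∈ f.support, k ∈ qtBox r d :=
      fun k hk => qtBox_mono (le_max_left da dg) (hda k hk)
    have hdg' : ∀ k ∈ g.support, k ∈ qtBox r d :=
      fun k hk => qtBox_mono (le_max_right da dg) (hdg k hk)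
    obtain ⟨u, v, hu, heq⟩ := qtCount d (qtFL sqq Q f) (qtFL sqq Q g)
      (qtFL_inj sqq Q hf) (qtFL_inj sqq Q hg)
      (fun n h hh => qtFL_bound sqq Q hda' n h hh)
      (fun n h hh => qtFL_bound sqq Q hdg' n h hh)
    refine ⟨qtPsi sqq Q v, qtPsi sqq Q u, ?_, ?_⟩
    · intro h0
      apply hu
      apply qtTheta_injective sqq Q
      rw [← qtPhi_psi sqq Q hQ, h0, map_zero, map_zero]
    · apply qtPhi_inj sqq Q hQ
      rw [map_mul, map_mul, qtPhi_psi, qtPhi_psi,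
        qtPhi_coord sqq Q hQ a, qtPhi_coord sqq Q hQ s, ← hfdef, ← hgdef,
        ← qtFL_theta, ← qtFL_theta, heq]

theorem qtQT_one_ne_zero : (1 : QuantumTorus R sqq Q) ≠ 0 := by
  intro h
  have h2 := congrArg (qtPhi sqq Q hQ) h
  rw [map_one, map_zero] at h2
  have h3 := DFunLike.congr_fun h2 (Finsupp.single (0 : Fin r → ℤ) (1 : R))
  simp only [Module.End.one_apply, LinearMap.zero_apply] at h3
  exact one_ne_zero (Finsupp.single_eq_zero.mp h3)

end OreQT
/-- Over a field `R`, the nonzero elements of the quantum torus `T(Q)`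
satisfy the left and right Ore conditions; consequently `T(Q)` has a ring of
fractions which is a division ring. -/
theorem quantumTorus_ore (R : Type) [Field R] (sqq : Rˣ)
    {r : ℕ} (Q : Matrix (Fin r) (Fin r) ℤ) (hQ : Qᵀ = -Q) :
    (∀ a s : QuantumTorus R sqq Q, s ≠ 0 → ∃ a' s' : QuantumTorus R sqq Q,
        s' ≠ 0 ∧ s' * a = a' * s) ∧
    (∀ a s : QuantumTorus R sqq Q, s ≠ 0 → ∃ a' s' : QuantumTorus R sqq Q,
        s' ≠ 0 ∧ a * s' = s * a') ∧
    ∃ (D : Type) (_ : DivisionRing D) (f : QuantumTorus R sqq Q →+* D),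
      Function.Injective f ∧
        ∀ d : D, ∃ a s : QuantumTorus R sqq Q, s ≠ 0 ∧ d = f a * (f s)⁻¹ := by
  classical
  have hleft := qtOre_left sqq Q hQ
  have hright := qtOre_right sqq Q hQ
  refine ⟨hleft, hright, ?_⟩
  haveI hnt : Nontrivial (QuantumTorus R sqq Q) := ⟨⟨1, 0, qtQT_one_ne_zero sqq Q hQ⟩⟩
  haveI hnzd : NoZeroDivisors (QuantumTorus R sqq Q) := by
    constructor
    intro x y hxy
    by_contra hcon
    push_neg at hcon
    exact qtQT_mul_ne_zero sqq Q hQ hcon.1 hcon.2 hxy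
  have hOre : ∀ (x : QuantumTorus R sqq Q) (s : nonZeroDivisors (QuantumTorus R sqq Q)),
      ∃ p : (QuantumTorus R sqq Q) × (nonZeroDivisors (QuantumTorus R sqq Q)),
        (p.2 : QuantumTorus R sqq Q) * x = p.1 * (s : QuantumTorus R sqq Q) := by
    intro x s
    obtain ⟨a', s', hs', heqq⟩ := hleft x (s : QuantumTorus R sqq Q)
      (nonZeroDivisors.ne_zero s.2)
    exact ⟨(a', ⟨s', mem_nonZeroDivisors_of_ne_zero hs'⟩), heqq⟩
  haveI oreset : OreLocalization.OreSet (nonZeroDivisors (QuantumTorus R sqq Q)) :=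
    OreLocalization.oreSetOfNoZeroDivisors
      (fun x s => (Classical.choose (hOre x s)).1)
      (fun x s => (Classical.choose (hOre x s)).2)
      (fun x s => Classical.choose_spec (hOre x s))
  have hS : nonZeroDivisors (QuantumTorus R sqq Q)
      ≤ nonZeroDivisorsLeft (QuantumTorus R sqq Q) := by
    intro x hx
    rw [mem_nonZeroDivisorsLeft_iff]
    intro y hy
    rcases mul_eq_zero.mp hy with h | h
    · exact absurd h (nonZeroDivisors.ne_zero hx)
    · exact h
  refine ⟨OreLocalization (nonZeroDivisors (QuantumTorus R sqq Q)) (QuantumTorus R sqq Q),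
    inferInstance, OreLocalization.numeratorRingHom, ?_, ?_⟩
  · exact OreLocalization.numeratorHom_inj hS
  · intro dd
    set f : QuantumTorus R sqq Q →+*
        OreLocalization (nonZeroDivisors (QuantumTorus R sqq Q)) (QuantumTorus R sqq Q) :=
      OreLocalization.numeratorRingHom with hfdef
    have hfapp : ∀ x : QuantumTorus R sqq Q,
        f x = x /ₒ (1 : nonZeroDivisors (QuantumTorus R sqq Q)) := by
      intro x
      rw [hfdef]
      exact OreLocalization.numeratorHom_apply
    have hfinj : Function.Injective f := OreLocalization.numeratorHom_inj hS
    rcases OreLocalization.ind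
      (β := fun q : OreLocalization (nonZeroDivisors (QuantumTorus R sqq Q))
        (QuantumTorus R sqq Q) => ∃ num den, q = num /ₒ den)
      (fun rr ss => ⟨rr, ss, rfl⟩) dd with ⟨num, den, rfl⟩
    have hden : (den : QuantumTorus R sqq Q) ≠ 0 := nonZeroDivisors.ne_zero den.2
    have hfden : f (den : QuantumTorus R sqq Q) ≠ 0 := by
      intro h0
      exact hden (hfinj (by rw [h0, map_zero]))
    have key : f (den : QuantumTorus R sqq Q) * (num /ₒ den) = f num := by
      rw [hfapp, hfapp]
      rw [OreLocalization.oreDiv_mul_char (den : QuantumTorus R sqq Q) num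
        (1 : nonZeroDivisors (QuantumTorus R sqq Q)) den 1 1 (by simp)]
      simp
    obtain ⟨a', s', hs', hformula⟩ := hright num (den : QuantumTorus R sqq Q) hden
    have hfs' : f s' ≠ 0 := by
      intro h0
      exact hs' (hfinj (by rw [h0, map_zero]))
    refine ⟨a', s', hs', ?_⟩
    rw [eq_mul_inv_iff_mul_eq₀ hfs']
    apply mul_left_cancel₀ hfden
    rw [← mul_assoc, key, ← map_mul, ← map_mul, hformula]
end
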